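/- arXiv:1211.7057 — 6 statements merged into one kernel-verified Lean document; each statement's English description precedes it below -/
import Mathlib

section
/- If G is a 2-uniform graph (simple graph) whose largest clique has order t, then λ(G) = (1/2)(1 − 1/t). -/
open Finset

/-- The evaluation of the Lagrangian polynomial of a hypergraph with edge set `E`
at a weighting `x`. -/
noncomputable def lagEval {n : ℕ} (E : Finset (Finset (Fin n))) (x : Fin n → ℝ) : ℝ :=
  ∑ e ∈ E, ∏ i ∈ e, x i

/-- A legal weighting: nonnegative entries summing to 1. -/
def IsLegal {n : ℕ} (x : Fin n → ℝ) : Prop :=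
  (∀ i, 0 ≤ x i) ∧ ∑ i, x i = 1

/-- The Lagrangian of a hypergraph: supremum of the Lagrangian polynomial over the simplex. -/
noncomputable def lagrangian {n : ℕ} (E : Finset (Finset (Fin n))) : ℝ :=
  sSup {v | ∃ x, IsLegal x ∧ lagEval E x = v}

/-- `s` is a clique of the graph with edge set `E`: every pair of distinct vertices
of `s` forms an edge. -/
def IsClique' {n : ℕ} (E : Finset (Finset (Fin n))) (s : Finset (Fin n)) : Prop :=
  ∀ i ∈ s, ∀ j ∈ s, i ≠ j → ({i, j} : Finset (Fin n)) ∈ E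

section Aux

variable {n : ℕ}

lemma no_both {E : Finset (Finset (Fin n))} (hE : ∀ e ∈ E, e.card = 2)
    {i j : Fin n} (hij : i ≠ j) (hnE : ({i, j} : Finset (Fin n)) ∉ E)
    {e : Finset (Fin n)} (he : e ∈ E) : ¬ (i ∈ e ∧ j ∈ e) := by
  rintro ⟨hi, hj⟩
  have hsub : ({i, j} : Finset (Fin n)) ⊆ e := by
    intro k hk
    simp only [mem_insert, mem_singleton] at hk
    rcases hk with rfl | rfl <;> assumption
  have hcard : ({i, j} : Finset (Fin n)).card = 2 := card_pair hij
  have : ({i, j} : Finset (Fin n)) = e :=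
    eq_of_subset_of_card_le hsub (by rw [hE e he, hcard])
  exact hnE (this ▸ he)

/-- Coefficient of `x i` in the Lagrangian polynomial (for 2-graphs). -/
noncomputable def coeff (E : Finset (Finset (Fin n))) (x : Fin n → ℝ) (i : Fin n) : ℝ :=
  ∑ e ∈ E.filter (fun e => i ∈ e), ∏ k ∈ e.erase i, x k

lemma decomp {E : Finset (Finset (Fin n))} (hE : ∀ e ∈ E, e.card = 2)
    {i j : Fin n} (hij : i ≠ j) (hnE : ({i, j} : Finset (Fin n)) ∉ E)
    (x : Fin n → ℝ) :
    lagEval E x = x i * coeff E x i + x j * coeff E x j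
      + ∑ e ∈ E.filter (fun e => i ∉ e ∧ j ∉ e), ∏ k ∈ e, x k := by
  classical
  have h1 : lagEval E x = ∑ e ∈ E.filter (fun e => i ∈ e), ∏ k ∈ e, x k
      + ∑ e ∈ E.filter (fun e => i ∉ e), ∏ k ∈ e, x k :=
    (sum_filter_add_sum_filter_not E _ _).symm
  have h2 : ∑ e ∈ E.filter (fun e => i ∉ e), ∏ k ∈ e, x k
      = ∑ e ∈ (E.filter (fun e => i ∉ e)).filter (fun e => j ∈ e), ∏ k ∈ e, x k
      + ∑ e ∈ (E.filter (fun e => i ∉ e)).filter (fun e => j ∉ e), ∏ k ∈ e, x k :=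
    (sum_filter_add_sum_filter_not _ _ _).symm
  have hf1 : (E.filter (fun e => i ∉ e)).filter (fun e => j ∈ e)
      = E.filter (fun e => j ∈ e) := by
    rw [filter_filter]
    apply filter_congr
    intro e he
    constructor
    · rintro ⟨_, h⟩; exact h
    · intro h; exact ⟨fun hi => no_both hE hij hnE he ⟨hi, h⟩, h⟩
  have hf2 : (E.filter (fun e => i ∉ e)).filter (fun e => j ∉ e)
      = E.filter (fun e => i ∉ e ∧ j ∉ e) := by
    rw [filter_filter]
  have hA : ∑ e ∈ E.filter (fun e => i ∈ e), ∏ k ∈ e, x k = x i * coeff E x i := by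
    rw [coeff, mul_sum]
    refine sum_congr rfl fun e he => ?_
    rw [mem_filter] at he
    exact (mul_prod_erase e x he.2).symm
  have hB : ∑ e ∈ E.filter (fun e => j ∈ e), ∏ k ∈ e, x k = x j * coeff E x j := by
    rw [coeff, mul_sum]
    refine sum_congr rfl fun e he => ?_
    rw [mem_filter] at he
    exact (mul_prod_erase e x he.2).symm
  rw [h1, h2, hf1, hf2, hA, hB]
  ring

lemma coeff_congr {E : Finset (Finset (Fin n))} (hE : ∀ e ∈ E, e.card = 2)
    {i j : Fin n} (hij : i ≠ j) (hnE : ({i, j} : Finset (Fin n)) ∉ E)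
    {x y : Fin n → ℝ} (hxy : ∀ k, k ≠ i → k ≠ j → x k = y k) :
    coeff E x i = coeff E y i := by
  refine sum_congr rfl fun e he => ?_
  rw [mem_filter] at he
  refine prod_congr rfl fun k hk => ?_
  have hki : k ≠ i := ne_of_mem_erase hk
  have hke : k ∈ e := mem_of_mem_erase hk
  have hkj : k ≠ j := fun h => no_both hE hij hnE he.1 ⟨he.2, h ▸ hke⟩
  exact hxy k hki hkj

lemma shift_le {E : Finset (Finset (Fin n))} (hE : ∀ e ∈ E, e.card = 2)
    {i j : Fin n} (hij : i ≠ j) (hnE : ({i, j} : Finset (Fin n)) ∉ E)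
    {x : Fin n → ℝ} (hxj : 0 ≤ x j) (hAB : coeff E x j ≤ coeff E x i) :
    lagEval E x ≤ lagEval E (Function.update (Function.update x j 0) i (x i + x j)) := by
  classical
  set y := Function.update (Function.update x j 0) i (x i + x j) with hy
  have hy_off : ∀ k, k ≠ i → k ≠ j → y k = x k := by
    intro k hki hkj
    simp [hy, Function.update_of_ne hki, Function.update_of_ne hkj]
  have hyi : y i = x i + x j := by simp [hy]
  have hyj : y j = 0 := by
    simp [hy, Function.update_of_ne (Ne.symm hij)]
  have hnE' : ({j, i} : Finset (Fin n)) ∉ E := by rwa [pair_comm]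
  have hA : coeff E x i = coeff E y i :=
    coeff_congr hE hij hnE (fun k h1 h2 => (hy_off k h1 h2).symm)
  have hB : coeff E x j = coeff E y j :=
    coeff_congr hE hij.symm hnE' (fun k h1 h2 => (hy_off k h2 h1).symm)
  have hC : ∑ e ∈ E.filter (fun e => i ∉ e ∧ j ∉ e), ∏ k ∈ e, x k
      = ∑ e ∈ E.filter (fun e => i ∉ e ∧ j ∉ e), ∏ k ∈ e, y k := by
    refine sum_congr rfl fun e he => ?_
    rw [mem_filter] at he
    refine prod_congr rfl fun k hk => ?_
    exact (hy_off k (fun h => he.2.1 (h ▸ hk)) (fun h => he.2.2 (h ▸ hk))).symm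
  rw [decomp hE hij hnE x, decomp hE hij hnE y, ← hA, ← hB, ← hC, hyi, hyj]
  nlinarith [mul_le_mul_of_nonneg_left hAB hxj]

lemma pc2_sum (x : Fin n → ℝ) (S : Finset (Fin n)) :
    2 * ∑ e ∈ S.powersetCard 2, ∏ k ∈ e, x k
      = (∑ i ∈ S, x i) ^ 2 - ∑ i ∈ S, (x i) ^ 2 := by
  classical
  induction S using Finset.induction_on with
  | empty =>
    rw [powersetCard_eq_empty.mpr (by simp)]
    simp
  | @insert a S ha ih =>
    have hpc : (insert a S).powersetCard 2
        = S.powersetCard 2 ∪ (S.powersetCard 1).image (insert a) :=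
      powersetCard_succ_insert ha 1
    have hdisj : Disjoint (S.powersetCard 2) ((S.powersetCard 1).image (insert a)) := by
      rw [disjoint_left]
      intro e he1 he2
      rw [mem_powersetCard] at he1
      rw [mem_image] at he2
      obtain ⟨f, _, rfl⟩ := he2
      exact ha (he1.1 (mem_insert_self a f))
    have hinj : ∑ e ∈ (S.powersetCard 1).image (insert a), ∏ k ∈ e, x k
        = ∑ e ∈ S.powersetCard 1, ∏ k ∈ insert a e, x k := by
      refine sum_image ?_
      intro e1 h1 e2 h2 h
      rw [mem_coe, mem_powersetCard] at h1 h2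
      have ha1 : a ∉ e1 := fun h' => ha (h1.1 h')
      have ha2 : a ∉ e2 := fun h' => ha (h2.1 h')
      rw [← erase_insert ha1, ← erase_insert ha2, h]
    have hone : ∑ e ∈ S.powersetCard 1, ∏ k ∈ insert a e, x k
        = x a * ∑ i ∈ S, x i := by
      rw [powersetCard_one, sum_map, mul_sum]
      refine sum_congr rfl fun i hi => ?_
      have hai : a ∉ ({i} : Finset (Fin n)) := by
        simp only [mem_singleton]
        rintro rfl; exact ha hi
      simp [prod_insert hai]
    rw [hpc, sum_union hdisj, hinj, hone, sum_insert ha, sum_insert ha]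
    nlinarith [ih]

lemma clique_bound {E : Finset (Finset (Fin n))} (hE : ∀ e ∈ E, e.card = 2)
    {t : ℕ} (ht : 1 ≤ t) (hmax : ∀ s, IsClique' E s → s.card ≤ t)
    {x : Fin n → ℝ} (hx : IsLegal x)
    (hS : IsClique' E (univ.filter (fun i => x i ≠ 0))) :
    lagEval E x ≤ 1 / 2 * (1 - 1 / (t : ℝ)) := by
  classical
  set S := univ.filter (fun i => x i ≠ 0) with hSdef
  have hzero : ∀ k, k ∉ S → x k = 0 := by
    intro k hk
    by_contra h
    exact hk (mem_filter.2 ⟨mem_univ k, h⟩)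
  have hsum : ∑ i ∈ S, x i = 1 := by
    rw [← hx.2]
    exact sum_filter_ne_zero univ
  have hScard : 0 < S.card := by
    rcases Nat.eq_zero_or_pos S.card with h | h
    · exfalso
      rw [card_eq_zero] at h
      rw [h, sum_empty] at hsum
      norm_num at hsum
    · exact h
  have hSt : S.card ≤ t := hmax S hS
  have hsplit : lagEval E x = ∑ e ∈ E.filter (fun e => e ⊆ S), ∏ k ∈ e, x k
      + ∑ e ∈ E.filter (fun e => ¬ e ⊆ S), ∏ k ∈ e, x k :=
    (sum_filter_add_sum_filter_not E _ _).symm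
  have hzero2 : ∑ e ∈ E.filter (fun e => ¬ e ⊆ S), ∏ k ∈ e, x k = 0 := by
    refine sum_eq_zero fun e he => ?_
    rw [mem_filter] at he
    obtain ⟨k, hke, hkS⟩ := not_subset.1 he.2
    exact prod_eq_zero hke (hzero k hkS)
  have hsub : E.filter (fun e => e ⊆ S) ⊆ S.powersetCard 2 := by
    intro e he
    rw [mem_filter] at he
    exact mem_powersetCard.2 ⟨he.2, hE e he.1⟩
  have hle : ∑ e ∈ E.filter (fun e => e ⊆ S), ∏ k ∈ e, x k
      ≤ ∑ e ∈ S.powersetCard 2, ∏ k ∈ e, x k := by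
    refine sum_le_sum_of_subset_of_nonneg hsub fun e _ _ => ?_
    exact prod_nonneg fun k _ => hx.1 k
  have hsq : (1 : ℝ) ≤ (S.card : ℝ) * ∑ i ∈ S, (x i) ^ 2 := by
    have := sq_sum_le_card_mul_sum_sq (s := S) (f := x)
    rw [hsum] at this
    simpa using this
  have hc0 : (0 : ℝ) < (S.card : ℝ) := by exact_mod_cast hScard
  have ht0 : (0 : ℝ) < (t : ℝ) := by exact_mod_cast ht
  have hct : (S.card : ℝ) ≤ (t : ℝ) := by exact_mod_cast hSt
  have hsq2 : (1 : ℝ) / (t : ℝ) ≤ ∑ i ∈ S, (x i) ^ 2 := by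
    have h1 : (1 : ℝ) / (S.card : ℝ) ≤ ∑ i ∈ S, (x i) ^ 2 := by
      rw [div_le_iff₀ hc0]
      linarith [hsq]
    calc (1 : ℝ) / (t : ℝ) ≤ 1 / (S.card : ℝ) := by
          apply one_div_le_one_div_of_le hc0 hct
      _ ≤ _ := h1
  have hkey := pc2_sum x S
  rw [hsum] at hkey
  rw [hsplit, hzero2, add_zero]
  nlinarith [hle, hkey, hsq2]

lemma step_le {E : Finset (Finset (Fin n))} (hE : ∀ e ∈ E, e.card = 2)
    {t : ℕ} (ht : 1 ≤ t) (hmax : ∀ s, IsClique' E s → s.card ≤ t) {N : ℕ}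
    (ih : ∀ x : Fin n → ℝ, IsLegal x → (univ.filter (fun i => x i ≠ 0)).card ≤ N →
      lagEval E x ≤ 1 / 2 * (1 - 1 / (t : ℝ)))
    {x : Fin n → ℝ} (hx : IsLegal x)
    (hcard : (univ.filter (fun i => x i ≠ 0)).card ≤ N + 1)
    {i j : Fin n} (hi : x i ≠ 0) (hj : x j ≠ 0) (hij : i ≠ j)
    (hnE : ({i, j} : Finset (Fin n)) ∉ E)
    (hAB : coeff E x j ≤ coeff E x i) :
    lagEval E x ≤ 1 / 2 * (1 - 1 / (t : ℝ)) := by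
  classical
  set y := Function.update (Function.update x j 0) i (x i + x j) with hy
  have hy_off : ∀ k, k ≠ i → k ≠ j → y k = x k := by
    intro k hki hkj
    simp [hy, Function.update_of_ne hki, Function.update_of_ne hkj]
  have hyi : y i = x i + x j := by simp [hy]
  have hyj : y j = 0 := by simp [hy, Function.update_of_ne (Ne.symm hij)]
  have hylegal : IsLegal y := by
    constructor
    · intro k
      by_cases hki : k = i
      · subst hki; rw [hyi]; exact add_nonneg (hx.1 k) (hx.1 j)
      · by_cases hkj : k = j
        · subst hkj; rw [hyj]
        · rw [hy_off k hki hkj]; exact hx.1 k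
    · have hjmem : j ∈ (univ : Finset (Fin n)) \ {i} := by
        simp [Ne.symm hij]
      have h1 : ∑ k, y k = (x i + x j) + ∑ k ∈ (univ : Finset (Fin n)) \ {i},
          Function.update x j 0 k := sum_update_of_mem (mem_univ i) _ _
      have h2 : ∑ k ∈ (univ : Finset (Fin n)) \ {i}, Function.update x j 0 k
          = 0 + ∑ k ∈ ((univ : Finset (Fin n)) \ {i}) \ {j}, x k :=
        sum_update_of_mem hjmem _ _
      have h3 : ∑ k, x k = ∑ k ∈ (univ : Finset (Fin n)) \ {i}, x k + x i :=
        sum_eq_sum_sdiff_singleton_add (mem_univ i) x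
      have h4 : ∑ k ∈ (univ : Finset (Fin n)) \ {i}, x k
          = ∑ k ∈ ((univ : Finset (Fin n)) \ {i}) \ {j}, x k + x j :=
        sum_eq_sum_sdiff_singleton_add hjmem x
      have hx2 := hx.2
      rw [h3, h4] at hx2
      rw [h1, h2]
      linarith
  have hiS : i ∈ univ.filter (fun k => x k ≠ 0) := mem_filter.2 ⟨mem_univ i, hi⟩
  have hjS : j ∈ univ.filter (fun k => x k ≠ 0) := mem_filter.2 ⟨mem_univ j, hj⟩
  have hysub : univ.filter (fun k => y k ≠ 0)
      ⊆ (univ.filter (fun k => x k ≠ 0)).erase j := by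
    intro k hk
    rw [mem_filter] at hk
    by_cases hkj : k = j
    · exfalso; subst hkj; exact hk.2 hyj
    · refine mem_erase.2 ⟨hkj, mem_filter.2 ⟨mem_univ k, ?_⟩⟩
      by_cases hki : k = i
      · subst hki; exact hi
      · rw [hy_off k hki hkj] at hk; exact hk.2
  have hycard : (univ.filter (fun k => y k ≠ 0)).card ≤ N := by
    calc (univ.filter (fun k => y k ≠ 0)).card
        ≤ ((univ.filter (fun k => x k ≠ 0)).erase j).card := card_le_card hysub
      _ = (univ.filter (fun k => x k ≠ 0)).card - 1 := card_erase_of_mem hjS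
      _ ≤ N := by omega
  calc lagEval E x ≤ lagEval E y := shift_le hE hij hnE (hx.1 j) hAB
    _ ≤ 1 / 2 * (1 - 1 / (t : ℝ)) := ih y hylegal hycard

lemma upper_bound {n : ℕ} {E : Finset (Finset (Fin n))} (hE : ∀ e ∈ E, e.card = 2)
    {t : ℕ} (ht : 1 ≤ t) (hmax : ∀ s, IsClique' E s → s.card ≤ t) :
    ∀ N : ℕ, ∀ x : Fin n → ℝ, IsLegal x →
      (univ.filter (fun i => x i ≠ 0)).card ≤ N →
      lagEval E x ≤ 1 / 2 * (1 - 1 / (t : ℝ)) := by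
  intro N
  induction N with
  | zero =>
    intro x hx h0
    exfalso
    have hS : univ.filter (fun i => x i ≠ 0) = ∅ := card_eq_zero.1 (Nat.le_zero.1 h0)
    have : ∑ i, x i = 0 := by
      refine sum_eq_zero fun k _ => ?_
      by_contra h
      have : k ∈ univ.filter (fun i => x i ≠ 0) := mem_filter.2 ⟨mem_univ k, h⟩
      rw [hS] at this
      exact notMem_empty k this
    rw [hx.2] at this
    norm_num at this
  | succ N ih =>
    intro x hx hcard
    by_cases hcl : IsClique' E (univ.filter (fun i => x i ≠ 0))
    · exact clique_bound hE ht hmax hx hcl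
    · simp only [IsClique'] at hcl
      push_neg at hcl
      obtain ⟨i, hi, j, hj, hij, hnE⟩ := hcl
      rw [mem_filter] at hi hj
      rcases le_total (coeff E x j) (coeff E x i) with hAB | hAB
      · exact step_le hE ht hmax ih hx hcard hi.2 hj.2 hij hnE hAB
      · have hnE' : ({j, i} : Finset (Fin n)) ∉ E := by rwa [pair_comm]
        exact step_le hE ht hmax ih hx hcard hj.2 hi.2 hij.symm hnE' hAB

lemma achieved {n : ℕ} {E : Finset (Finset (Fin n))} (hE : ∀ e ∈ E, e.card = 2)
    {t : ℕ} (ht : 1 ≤ t) {s : Finset (Fin n)} (hs : IsClique' E s)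
    (hst : s.card = t) :
    ∃ x, IsLegal x ∧ lagEval E x = 1 / 2 * (1 - 1 / (t : ℝ)) := by
  classical
  have ht0 : (0 : ℝ) < (t : ℝ) := by exact_mod_cast ht
  refine ⟨fun i => if i ∈ s then 1 / (t : ℝ) else 0, ⟨?_, ?_⟩, ?_⟩
  · intro i
    dsimp only
    split
    · positivity
    · exact le_rfl
  · dsimp only
    rw [sum_ite_mem, univ_inter, sum_const, hst, nsmul_eq_mul]
    field_simp
  · show lagEval E (fun i => if i ∈ s then 1 / (t : ℝ) else 0) = _
    have hfilter : E.filter (fun e => e ⊆ s) = s.powersetCard 2 := by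
      ext e
      rw [mem_filter, mem_powersetCard]
      constructor
      · rintro ⟨heE, hes⟩
        exact ⟨hes, hE e heE⟩
      · rintro ⟨hes, hec⟩
        obtain ⟨a, b, hab, rfl⟩ := card_eq_two.1 hec
        refine ⟨hs a (hes (mem_insert_self a _)) b
          (hes (mem_insert_of_mem (mem_singleton_self b))) hab, hes⟩
    have hzero2 : ∑ e ∈ E.filter (fun e => ¬ e ⊆ s), ∏ k ∈ e,
        (if k ∈ s then 1 / (t : ℝ) else 0) = 0 := by
      refine sum_eq_zero fun e he => ?_
      rw [mem_filter] at he
      obtain ⟨k, hke, hks⟩ := not_subset.1 he.2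
      exact prod_eq_zero hke (if_neg hks)
    have h1 : ∑ e ∈ E.filter (fun e => e ⊆ s), ∏ k ∈ e,
        (if k ∈ s then 1 / (t : ℝ) else 0) = (t.choose 2 : ℝ) * (1 / (t : ℝ)) ^ 2 := by
      rw [hfilter]
      have : ∀ e ∈ s.powersetCard 2, ∏ k ∈ e,
          (if k ∈ s then 1 / (t : ℝ) else 0) = (1 / (t : ℝ)) ^ 2 := by
        intro e he
        rw [mem_powersetCard] at he
        calc ∏ k ∈ e, (if k ∈ s then 1 / (t : ℝ) else 0)
            = ∏ _k ∈ e, (1 / (t : ℝ)) := prod_congr rfl fun k hk => if_pos (he.1 hk)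
          _ = (1 / (t : ℝ)) ^ e.card := prod_const _
          _ = (1 / (t : ℝ)) ^ 2 := by rw [he.2]
      rw [sum_congr rfl this, sum_const, card_powersetCard, hst, nsmul_eq_mul]
    have hval : lagEval E (fun i => if i ∈ s then 1 / (t : ℝ) else 0)
        = ∑ e ∈ E.filter (fun e => e ⊆ s), ∏ k ∈ e,
            (if k ∈ s then 1 / (t : ℝ) else 0)
          + ∑ e ∈ E.filter (fun e => ¬ e ⊆ s), ∏ k ∈ e,
            (if k ∈ s then 1 / (t : ℝ) else 0) :=
      (sum_filter_add_sum_filter_not E _ _).symm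
    rw [hval, h1, hzero2, add_zero, Nat.cast_choose_two]
    have htne : (t : ℝ) ≠ 0 := ne_of_gt ht0
    field_simp

end Aux

/-- Motzkin–Straus: if the largest clique of a 2-graph `G` has order `t`, then
`λ(G) = (1/2)(1 - 1/t)`. -/
theorem motzkin_straus {n t : ℕ} (E : Finset (Finset (Fin n)))
    (hE : ∀ e ∈ E, e.card = 2) (ht : 1 ≤ t)
    (hclique : ∃ s, IsClique' E s ∧ s.card = t)
    (hmax : ∀ s, IsClique' E s → s.card ≤ t) :
    lagrangian E = (1 / 2) * (1 - 1 / (t : ℝ)) := by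
  obtain ⟨s, hs, hst⟩ := hclique
  obtain ⟨x0, hx0, hval0⟩ := achieved hE ht hs hst
  have hub : ∀ v ∈ {v | ∃ x, IsLegal x ∧ lagEval E x = v},
      v ≤ 1 / 2 * (1 - 1 / (t : ℝ)) := by
    rintro v ⟨x, hx, rfl⟩
    exact upper_bound hE ht hmax (univ.filter (fun i => x i ≠ 0)).card x hx le_rfl
  have hmem : (1 / 2 * (1 - 1 / (t : ℝ))) ∈ {v | ∃ x, IsLegal x ∧ lagEval E x = v} :=
    ⟨x0, hx0, hval0⟩
  refine le_antisymm ?_ ?_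
  · exact csSup_le ⟨_, hmem⟩ hub
  · exact le_csSup ⟨_, hub⟩ hmem
end

section
/- Let G be a left-compressed r-uniform hypergraph on [n] and let x be an optimal weighting with k nonzero weights satisfying the minimality condition. Then for all 1 ≤ i < j ≤ k, (x_i − x_j)·λ(E_{ij}, x) = λ(E_{i\j}, x), where E_{ij} = {B ∈ [n]^(r−2) : B ∪ {i,j} ∈ E(G)} and E_{i\j} = E_i ∩ E_j^c. -/
open Finset

/-- `E` is left-compressed: whenever the increasing enumeration of `f` is pointwise at most
that of an edge `e`, `f` is also an edge. -/
def LeftCompressed {n : ℕ} (E : Finset (Finset (Fin n))) : Prop :=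
  ∀ e ∈ E, ∀ f : Finset (Fin n),
    List.Forall₂ (· ≤ ·) (f.sort (· ≤ ·)) (e.sort (· ≤ ·)) → f ∈ E


section OrderedInsertAux

variable {α : Type*} [DecidableEq α] [LinearOrder α]

private lemma forall₂_cons_orderedInsert (j : α) :
    ∀ (l : List α) (c : α), List.Pairwise (· ≤ ·) (c :: l) → c ≤ j →
      List.Forall₂ (· ≤ ·) (c :: l) (List.orderedInsert (· ≤ ·) j l)
  | [], c, _, hcj => by simpa using hcj
  | b :: l', c, hs, hcj => by
    rcases List.pairwise_cons.1 hs with ⟨hc, hs'⟩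
    by_cases h : j ≤ b
    · rw [List.orderedInsert_cons_of_le _ _ h]
      exact List.Forall₂.cons hcj (List.forall₂_same.2 fun x _ => le_rfl)
    · simp only [List.orderedInsert, if_neg h]
      exact List.Forall₂.cons (hc b (by simp))
        (forall₂_cons_orderedInsert j l' b hs' (le_of_not_ge h))

private lemma forall₂_orderedInsert_orderedInsert {i j : α} (hij : i ≤ j) :
    ∀ l : List α, List.Pairwise (· ≤ ·) l →
      List.Forall₂ (· ≤ ·) (List.orderedInsert (· ≤ ·) i l) (List.orderedInsert (· ≤ ·) j l)
  | [], _ => by simpa using hij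
  | a :: l', hs => by
    rcases List.pairwise_cons.1 hs with ⟨ha, hs'⟩
    by_cases hia : i ≤ a
    · by_cases hja : j ≤ a
      · rw [List.orderedInsert_cons_of_le _ _ hia, List.orderedInsert_cons_of_le _ _ hja]
        exact List.Forall₂.cons hij (List.forall₂_same.2 fun x _ => le_rfl)
      · rw [List.orderedInsert_cons_of_le _ _ hia]
        simp only [List.orderedInsert, if_neg hja]
        exact List.Forall₂.cons hia
          (forall₂_cons_orderedInsert j l' a hs (le_of_not_ge hja))
    · have hja : ¬ j ≤ a := fun h => hia (hij.trans h)
      simp only [List.orderedInsert, if_neg hia, if_neg hja]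
      exact List.Forall₂.cons le_rfl (forall₂_orderedInsert_orderedInsert hij l' hs')

private lemma sort_insert_eq_orderedInsert {i : α} {A : Finset α} (h : i ∉ A) :
    (insert i A).sort (· ≤ ·) = (A.sort (· ≤ ·)).orderedInsert (· ≤ ·) i := by
  have hperm : List.Perm ((insert i A).sort (· ≤ ·))
      ((A.sort (· ≤ ·)).orderedInsert (· ≤ ·) i) :=
    ((Finset.sort_perm_toList _ _).trans
      ((Finset.toList_insert h).trans
        (List.Perm.cons i (Finset.sort_perm_toList _ _).symm))).trans
      (List.perm_orderedInsert _ _ _).symm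
  exact List.Perm.eq_of_pairwise' (Finset.pairwise_sort _ _)
    (List.Pairwise.orderedInsert _ _ (Finset.pairwise_sort _ _)) hperm

private lemma forall₂_sort_insert {i j : α} (hij : i ≤ j) {A : Finset α}
    (hi : i ∉ A) (hj : j ∉ A) :
    List.Forall₂ (· ≤ ·) ((insert i A).sort (· ≤ ·)) ((insert j A).sort (· ≤ ·)) := by
  rw [sort_insert_eq_orderedInsert hi, sort_insert_eq_orderedInsert hj]
  exact forall₂_orderedInsert_orderedInsert hij _ (Finset.pairwise_sort _ _)

end OrderedInsertAux


/-- For a left-compressed `G` with optimal weighting `x` of minimal support: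
`(x_i − x_j) · λ(E_{ij}, x) = λ(E_{i\j}, x)` for supported `i < j`. -/
theorem left_compressed_weight_diff {n r : ℕ} (E : Finset (Finset (Fin n)))
    (hE : ∀ e ∈ E, e.card = r) (hlc : LeftCompressed E)
    (x : Fin n → ℝ) (hx : IsLegal x) (hopt : lagEval E x = lagrangian E)
    (hmin : ∀ y : Fin n → ℝ, IsLegal y →
      (univ.filter (fun i => y i ≠ 0)).card < (univ.filter (fun i => x i ≠ 0)).card →
      lagEval E y < lagrangian E) :
    ∀ i j : Fin n, i < j → x i ≠ 0 → x j ≠ 0 →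
      (x i - x j) *
        lagEval ((univ.powersetCard (r - 2)).filter
          (fun B => i ∉ B ∧ j ∉ B ∧ insert i (insert j B) ∈ E)) x
      = lagEval ((univ.powersetCard (r - 1)).filter
          (fun A => i ∉ A ∧ j ∉ A ∧ insert i A ∈ E ∧ insert j A ∉ E)) x := by
  classical
  intro i j hij hxi hxj
  have hne : i ≠ j := ne_of_lt hij
  obtain ⟨hx0, hx1⟩ := hx
  have hxi' : 0 < x i := (hx0 i).lt_of_ne (Ne.symm hxi)
  have hxj' : 0 < x j := (hx0 j).lt_of_ne (Ne.symm hxj)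
  set Eij := (univ.powersetCard (r - 2)).filter
      (fun B => i ∉ B ∧ j ∉ B ∧ insert i (insert j B) ∈ E) with hEijdef
  set Si := (univ.powersetCard (r - 1)).filter
      (fun A => i ∉ A ∧ j ∉ A ∧ insert i A ∈ E) with hSidef
  set Sj := (univ.powersetCard (r - 1)).filter
      (fun A => i ∉ A ∧ j ∉ A ∧ insert j A ∈ E) with hSjdef
  set Dd := (univ.powersetCard (r - 1)).filter
      (fun A => i ∉ A ∧ j ∉ A ∧ insert i A ∈ E ∧ insert j A ∉ E) with hDdef
  set P := lagEval Eij x with hP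
  set Qi := lagEval Si x with hQi
  set Qj := lagEval Sj x with hQj
  -- Step A: Qi = Qj + lagEval Dd x, via left-compression
  have hstepA : Qi = Qj + lagEval Dd x := by
    have h1 : Si.filter (fun A => insert j A ∈ E) = Sj := by
      ext A
      simp only [hSidef, hSjdef, mem_filter, Finset.mem_powersetCard]
      constructor
      · rintro ⟨⟨hsub, hiA, hjA, -⟩, hjE⟩
        exact ⟨hsub, hiA, hjA, hjE⟩
      · rintro ⟨hsub, hiA, hjA, hjE⟩
        refine ⟨⟨hsub, hiA, hjA, ?_⟩, hjE⟩
        exact hlc _ hjE (insert i A) (forall₂_sort_insert (le_of_lt hij) hiA hjA)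
    have h2 : Si.filter (fun A => ¬ insert j A ∈ E) = Dd := by
      ext A
      simp only [hSidef, hDdef, mem_filter, Finset.mem_powersetCard]
      tauto
    rw [hQi, hQj, lagEval, ← Finset.sum_filter_add_sum_filter_not Si
      (fun A => insert j A ∈ E) (fun A => ∏ v ∈ A, x v), h1, h2]
    rfl
  -- decomposition lemma
  have key : ∀ z : Fin n → ℝ, (∀ v : Fin n, v ≠ i → v ≠ j → z v = x v) →
      lagEval E z = z i * z j * P + z i * Qi + z j * Qj
        + ∑ e ∈ E.filter (fun e => i ∉ e ∧ j ∉ e), ∏ v ∈ e, x v := by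
    intro z hz
    have hzp : ∀ e : Finset (Fin n), i ∉ e → j ∉ e →
        ∏ v ∈ e, z v = ∏ v ∈ e, x v := by
      intro e hi hj
      exact Finset.prod_congr rfl fun v hv =>
        hz v (fun h => hi (h ▸ hv)) (fun h => hj (h ▸ hv))
    have h4 : lagEval E z
        = (∑ e ∈ E.filter (fun e => i ∈ e ∧ j ∈ e), ∏ v ∈ e, z v)
        + (∑ e ∈ E.filter (fun e => i ∈ e ∧ j ∉ e), ∏ v ∈ e, z v)
        + ((∑ e ∈ E.filter (fun e => i ∉ e ∧ j ∈ e), ∏ v ∈ e, z v)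
        + (∑ e ∈ E.filter (fun e => i ∉ e ∧ j ∉ e), ∏ v ∈ e, z v)) := by
      rw [lagEval, ← Finset.sum_filter_add_sum_filter_not E (fun e => i ∈ e)
        (fun e => ∏ v ∈ e, z v),
        ← Finset.sum_filter_add_sum_filter_not (E.filter (fun e => i ∈ e)) (fun e => j ∈ e)
        (fun e => ∏ v ∈ e, z v),
        ← Finset.sum_filter_add_sum_filter_not (E.filter (fun e => i ∉ e)) (fun e => j ∈ e)
        (fun e => ∏ v ∈ e, z v),
        Finset.filter_filter, Finset.filter_filter, Finset.filter_filter, Finset.filter_filter]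
    have hS1 : ∑ e ∈ E.filter (fun e => i ∈ e ∧ j ∈ e), ∏ v ∈ e, z v
        = z i * z j * P := by
      rw [hP, hEijdef, lagEval, Finset.mul_sum]
      refine Finset.sum_nbij' (fun e => (e.erase i).erase j)
        (fun B => insert i (insert j B)) ?_ ?_ ?_ ?_ ?_
      · rintro e he
        rw [mem_filter] at he
        obtain ⟨heE, hie, hje⟩ := he
        have hje' : j ∈ e.erase i := Finset.mem_erase.2 ⟨Ne.symm hne, hje⟩
        refine Finset.mem_filter.2 ⟨Finset.mem_powersetCard.2 ⟨Finset.subset_univ _, ?_⟩,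
          ?_, ?_, ?_⟩
        · rw [Finset.card_erase_of_mem hje', Finset.card_erase_of_mem hie, hE e heE]
          omega
        · intro h
          exact (Finset.mem_erase.1 (Finset.mem_of_mem_erase h)).1 rfl
        · exact fun h => (Finset.mem_erase.1 h).1 rfl
        · rw [Finset.insert_erase hje', Finset.insert_erase hie]
          exact heE
      · rintro B hB
        rw [mem_filter] at hB
        obtain ⟨-, hiB, hjB, hBE⟩ := hB
        refine Finset.mem_filter.2 ⟨hBE, Finset.mem_insert_self _ _,
          Finset.mem_insert_of_mem (Finset.mem_insert_self _ _)⟩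
      · rintro e he
        rw [mem_filter] at he
        obtain ⟨-, hie, hje⟩ := he
        have hje' : j ∈ e.erase i := Finset.mem_erase.2 ⟨Ne.symm hne, hje⟩
        show insert i (insert j ((e.erase i).erase j)) = e
        rw [Finset.insert_erase hje', Finset.insert_erase hie]
      · rintro B hB
        rw [mem_filter] at hB
        obtain ⟨-, hiB, hjB, -⟩ := hB
        have hi' : i ∉ insert j B := by
          simp only [Finset.mem_insert]
          rintro (h | h)
          exacts [hne h, hiB h]
        show ((insert i (insert j B)).erase i).erase j = B
        rw [Finset.erase_insert hi', Finset.erase_insert hjB]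
      · rintro e he
        rw [mem_filter] at he
        obtain ⟨-, hie, hje⟩ := he
        have hje' : j ∈ e.erase i := Finset.mem_erase.2 ⟨Ne.symm hne, hje⟩
        rw [← Finset.mul_prod_erase e z hie, ← Finset.mul_prod_erase (e.erase i) z hje',
          hzp _ (fun h => (Finset.mem_erase.1 (Finset.mem_of_mem_erase h)).1 rfl)
            (fun h => (Finset.mem_erase.1 h).1 rfl)]
        ring
    have hS2 : ∑ e ∈ E.filter (fun e => i ∈ e ∧ j ∉ e), ∏ v ∈ e, z v
        = z i * Qi := by
      rw [hQi, hSidef, lagEval, Finset.mul_sum]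
      refine Finset.sum_nbij' (fun e => e.erase i) (fun A => insert i A) ?_ ?_ ?_ ?_ ?_
      · rintro e he
        rw [mem_filter] at he
        obtain ⟨heE, hie, hje⟩ := he
        refine Finset.mem_filter.2 ⟨Finset.mem_powersetCard.2 ⟨Finset.subset_univ _, ?_⟩,
          Finset.notMem_erase _ _, fun h => hje (Finset.mem_of_mem_erase h), ?_⟩
        · rw [Finset.card_erase_of_mem hie, hE e heE]
        · rw [Finset.insert_erase hie]; exact heE
      · rintro A hA
        rw [mem_filter] at hA
        obtain ⟨-, hiA, hjA, hAE⟩ := hA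
        refine Finset.mem_filter.2 ⟨hAE, Finset.mem_insert_self _ _, ?_⟩
        simp only [Finset.mem_insert]
        rintro (h | h)
        exacts [hne h.symm, hjA h]
      · rintro e he
        rw [mem_filter] at he
        show insert i (e.erase i) = e
        exact Finset.insert_erase he.2.1
      · rintro A hA
        rw [mem_filter] at hA
        show (insert i A).erase i = A
        exact Finset.erase_insert hA.2.1
      · rintro e he
        rw [mem_filter] at he
        obtain ⟨-, hie, hje⟩ := he
        rw [← Finset.mul_prod_erase e z hie,
          hzp _ (Finset.notMem_erase _ _) (fun h => hje (Finset.mem_of_mem_erase h))]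
    have hS3 : ∑ e ∈ E.filter (fun e => i ∉ e ∧ j ∈ e), ∏ v ∈ e, z v
        = z j * Qj := by
      rw [hQj, hSjdef, lagEval, Finset.mul_sum]
      refine Finset.sum_nbij' (fun e => e.erase j) (fun A => insert j A) ?_ ?_ ?_ ?_ ?_
      · rintro e he
        rw [mem_filter] at he
        obtain ⟨heE, hie, hje⟩ := he
        refine Finset.mem_filter.2 ⟨Finset.mem_powersetCard.2 ⟨Finset.subset_univ _, ?_⟩,
          fun h => hie (Finset.mem_of_mem_erase h), Finset.notMem_erase _ _, ?_⟩
        · rw [Finset.card_erase_of_mem hje, hE e heE]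
        · rw [Finset.insert_erase hje]; exact heE
      · rintro A hA
        rw [mem_filter] at hA
        obtain ⟨-, hiA, hjA, hAE⟩ := hA
        refine Finset.mem_filter.2 ⟨hAE, ?_, Finset.mem_insert_self _ _⟩
        simp only [Finset.mem_insert]
        rintro (h | h)
        exacts [hne h, hiA h]
      · rintro e he
        rw [mem_filter] at he
        show insert j (e.erase j) = e
        exact Finset.insert_erase he.2.2
      · rintro A hA
        rw [mem_filter] at hA
        show (insert j A).erase j = A
        exact Finset.erase_insert hA.2.2.1
      · rintro e he
        rw [mem_filter] at he
        obtain ⟨-, hie, hje⟩ := he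
        rw [← Finset.mul_prod_erase e z hje,
          hzp _ (fun h => hie (Finset.mem_of_mem_erase h)) (Finset.notMem_erase _ _)]
    have hS4 : ∑ e ∈ E.filter (fun e => i ∉ e ∧ j ∉ e), ∏ v ∈ e, z v
        = ∑ e ∈ E.filter (fun e => i ∉ e ∧ j ∉ e), ∏ v ∈ e, x v := by
      refine Finset.sum_congr rfl fun e he => ?_
      rw [mem_filter] at he
      exact hzp e he.2.1 he.2.2
    rw [h4, hS1, hS2, hS3, hS4]
    ring
  set S4 := ∑ e ∈ E.filter (fun e => i ∉ e ∧ j ∉ e), ∏ v ∈ e, x v with hS4def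
  have hxeval : lagEval E x = x i * x j * P + x i * Qi + x j * Qj + S4 :=
    key x (fun v _ _ => rfl)
  -- upper bound
  have hbound : ∀ z : Fin n → ℝ, IsLegal z → lagEval E z ≤ lagEval E x := by
    intro z hz
    rw [hopt]
    have hbdd : BddAbove {v | ∃ x, IsLegal x ∧ lagEval E x = v} := by
      refine ⟨(E.card : ℝ), ?_⟩
      rintro v ⟨w, ⟨hw0, hw1⟩, rfl⟩
      calc lagEval E w ≤ ∑ e ∈ E, (1 : ℝ) := by
            refine Finset.sum_le_sum fun e _ => ?_
            refine Finset.prod_le_one (fun v _ => hw0 v) (fun v _ => ?_)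
            rw [← hw1]
            exact Finset.single_le_sum (fun a _ => hw0 a) (Finset.mem_univ v)
        _ = E.card := by simp
    exact le_csSup hbdd ⟨z, hz, rfl⟩
  have hPnn : 0 ≤ P := by
    rw [hP, lagEval]
    exact Finset.sum_nonneg fun B _ => Finset.prod_nonneg fun v _ => hx0 v
  -- perturbation
  set C := (x i - x j) * P - Qi + Qj with hC
  have hpert : ∀ ε : ℝ, |ε| ≤ min (x i) (x j) → ε * C ≤ ε ^ 2 * P := by
    intro ε hε
    rw [abs_le] at hε
    have hεi : ε ≤ x i := hε.2.trans (min_le_left _ _)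
    have hεj : -(x j) ≤ ε := le_trans (neg_le_neg (min_le_right (x i) (x j))) hε.1
    set y : Fin n → ℝ :=
      Function.update (Function.update x i (x i - ε)) j (x j + ε) with hy
    have hyv : ∀ v : Fin n, v ≠ i → v ≠ j → y v = x v := by
      intro v hvi hvj
      rw [hy, Function.update_of_ne hvj, Function.update_of_ne hvi]
    have hyi : y i = x i - ε := by
      rw [hy, Function.update_of_ne hne, Function.update_self]
    have hyj : y j = x j + ε := by rw [hy, Function.update_self]
    have hylegal : IsLegal y := by
      constructor
      · intro v
        by_cases hvi : v = i
        · subst hvi; rw [hyi]; linarith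
        by_cases hvj : v = j
        · subst hvj; rw [hyj]; linarith
        · rw [hyv v hvi hvj]; exact hx0 v
      · have hiu : i ∈ (univ : Finset (Fin n)).erase j := Finset.mem_erase.2 ⟨hne, mem_univ i⟩
        rw [hy, Finset.sum_update_of_mem (mem_univ j), Finset.sum_update_of_mem]
        · have hsum2 : ∑ v ∈ ((univ : Finset (Fin n)) \ {j}) \ {i}, x v
              = 1 - x i - x j := by
            have e1 : x j + ∑ v ∈ (univ : Finset (Fin n)) \ {j}, x v = 1 := by
              rw [← hx1]
              rw [Finset.sdiff_singleton_eq_erase]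
              exact Finset.add_sum_erase _ x (mem_univ j)
            have e2 : x i + ∑ v ∈ ((univ : Finset (Fin n)) \ {j}) \ {i}, x v
                = ∑ v ∈ (univ : Finset (Fin n)) \ {j}, x v := by
              rw [Finset.sdiff_singleton_eq_erase, Finset.sdiff_singleton_eq_erase]
              exact Finset.add_sum_erase _ x (Finset.mem_erase.2 ⟨hne, mem_univ i⟩)
            linarith
          rw [hsum2]
          ring
        · rw [Finset.sdiff_singleton_eq_erase]
          exact hiu
    have hyeval := key y hyv
    have hle := hbound y hylegal
    rw [hyeval, hxeval, hyi, hyj] at hle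
    nlinarith [hle]
  -- conclude C = 0
  have hCzero : C = 0 := by
    by_contra hC0
    have habs : ∀ δ : ℝ, 0 < δ → δ ≤ min (x i) (x j) → |C| ≤ δ * P := by
      intro δ hδ hδm
      have h1 := hpert δ (by rw [abs_of_pos hδ]; exact hδm)
      have h2 := hpert (-δ) (by rw [abs_neg, abs_of_pos hδ]; exact hδm)
      rw [abs_le]
      constructor
      · nlinarith
      · nlinarith
    set δ := min (min (x i) (x j)) (|C| / (P + 1)) with hδdef
    have hCpos : 0 < |C| := abs_pos.2 hC0
    have hδpos : 0 < δ := by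
      apply lt_min (lt_min hxi' hxj')
      positivity
    have h3 := habs δ hδpos (min_le_left _ _)
    have h4 : δ ≤ |C| / (P + 1) := min_le_right _ _
    have h5 : δ * (P + 1) ≤ |C| := by
      rw [le_div_iff₀ (by positivity : (0:ℝ) < P + 1)] at h4
      exact h4
    linarith
  rw [hstepA] at hC
  linarith [hCzero, hC]
end

section
/- If G is a left-compressed r-uniform hypergraph with optimal weighting x having k nonzero weights (minimal support), and E_{i\j} = ∅ for some 1 ≤ i < j ≤ k, then x_i = x_j. -/
open Finset

lemma forall₂_cons_orderedInsert_s7 {α : Type*} [LinearOrder α] :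
    ∀ (l : List α), l.Pairwise (· ≤ ·) → ∀ a j : α, a ≤ j → (∀ b ∈ l, a ≤ b) →
      List.Forall₂ (· ≤ ·) (a :: l) (l.orderedInsert (· ≤ ·) j)
  | [], _, a, j, haj, _ => by simp [List.orderedInsert, haj]
  | b :: l, hs, a, j, haj, hab => by
    by_cases h : j ≤ b
    · rw [List.orderedInsert_cons_of_le _ _ h]
      exact List.Forall₂.cons haj (List.forall₂_same.2 fun x _ => le_refl x)
    · simp only [List.orderedInsert, if_neg h]
      exact List.Forall₂.cons (hab b (by simp))
        (forall₂_cons_orderedInsert_s7 l hs.of_cons b j (le_of_not_ge h)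
          fun c hc => (List.pairwise_cons.1 hs).1 c hc)

lemma forall₂_orderedInsert {α : Type*} [LinearOrder α] :
    ∀ (l : List α), l.Pairwise (· ≤ ·) → ∀ i j : α, i ≤ j →
      List.Forall₂ (· ≤ ·) (l.orderedInsert (· ≤ ·) i) (l.orderedInsert (· ≤ ·) j)
  | [], _, i, j, hij => by simp [List.orderedInsert, hij]
  | b :: l, hs, i, j, hij => by
    by_cases h : i ≤ b
    · rw [List.orderedInsert_cons_of_le _ _ h]
      by_cases h' : j ≤ b
      · rw [List.orderedInsert_cons_of_le _ _ h']
        exact List.Forall₂.cons hij (List.forall₂_same.2 fun x _ => le_refl x)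
      · simp only [List.orderedInsert, if_neg h']
        exact List.Forall₂.cons h
          (forall₂_cons_orderedInsert_s7 l hs.of_cons b j (le_of_not_ge h')
            fun c hc => (List.pairwise_cons.1 hs).1 c hc)
    · have h' : ¬ j ≤ b := fun hh => h (hij.trans hh)
      simp only [List.orderedInsert, if_neg h, if_neg h']
      exact List.Forall₂.cons (le_refl b) (forall₂_orderedInsert l hs.of_cons i j hij)

lemma sort_insert_eq_orderedInsert_s7 {α : Type*} [LinearOrder α] [DecidableEq α]
    {a : α} {s : Finset α} (h : a ∉ s) :
    (insert a s).sort (· ≤ ·) = (s.sort (· ≤ ·)).orderedInsert (· ≤ ·) a := by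
  refine List.Perm.eq_of_pairwise' (Finset.pairwise_sort _ _)
    ((Finset.pairwise_sort s (· ≤ ·)).orderedInsert _ _) ?_
  have h1 : List.Perm ((insert a s).sort (· ≤ ·)) (a :: s.sort (· ≤ ·)) := by
    rw [← Multiset.coe_eq_coe]
    push_cast [Finset.sort_eq]
    rw [Finset.insert_val, Multiset.ndinsert_of_notMem h]
    rw [← Multiset.cons_coe, Finset.sort_eq]
  exact h1.trans (List.perm_orderedInsert _ _ _).symm

lemma lagEval_le_card {n : ℕ} (E : Finset (Finset (Fin n))) (y : Fin n → ℝ)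
    (hy : IsLegal y) : lagEval E y ≤ E.card := by
  have h1 : ∀ v, y v ≤ 1 := by
    intro v
    rw [← hy.2]
    exact Finset.single_le_sum (fun w _ => hy.1 w) (mem_univ v)
  calc lagEval E y ≤ ∑ e ∈ E, (1 : ℝ) := by
        apply Finset.sum_le_sum
        intro e _
        exact Finset.prod_le_one (fun v _ => hy.1 v) (fun v _ => h1 v)
    _ = E.card := by simp

lemma bddAbove_lag {n : ℕ} (E : Finset (Finset (Fin n))) :
    BddAbove {v | ∃ x, IsLegal x ∧ lagEval E x = v} := by
  refine ⟨E.card, fun v hv => ?_⟩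
  obtain ⟨y, hy, rfl⟩ := hv
  exact lagEval_le_card E y hy

lemma lagEval_le_lagrangian {n : ℕ} (E : Finset (Finset (Fin n))) (y : Fin n → ℝ)
    (hy : IsLegal y) : lagEval E y ≤ lagrangian E :=
  le_csSup (bddAbove_lag E) ⟨y, hy, rfl⟩

lemma lagEval_decomp {n : ℕ} (E : Finset (Finset (Fin n))) (i j : Fin n) (hij : i ≠ j)
    (y : Fin n → ℝ) :
    lagEval E y =
      y i * y j * (∑ e ∈ E.filter (fun e => i ∈ e ∧ j ∈ e), ∏ v ∈ (e.erase i).erase j, y v)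
      + y i * (∑ e ∈ E.filter (fun e => i ∈ e ∧ j ∉ e), ∏ v ∈ e.erase i, y v)
      + y j * (∑ e ∈ E.filter (fun e => i ∉ e ∧ j ∈ e), ∏ v ∈ e.erase j, y v)
      + (∑ e ∈ E.filter (fun e => i ∉ e ∧ j ∉ e), ∏ v ∈ e, y v) := by
  classical
  have hsplit : lagEval E y
      = (∑ e ∈ E.filter (fun e => i ∈ e ∧ j ∈ e), ∏ v ∈ e, y v)
      + (∑ e ∈ E.filter (fun e => i ∈ e ∧ j ∉ e), ∏ v ∈ e, y v)
      + (∑ e ∈ E.filter (fun e => i ∉ e ∧ j ∈ e), ∏ v ∈ e, y v)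
      + (∑ e ∈ E.filter (fun e => i ∉ e ∧ j ∉ e), ∏ v ∈ e, y v) := by
    rw [lagEval, ← Finset.sum_filter_add_sum_filter_not E (fun e => i ∈ e)]
    rw [← Finset.sum_filter_add_sum_filter_not (E.filter (fun e => i ∈ e)) (fun e => j ∈ e),
        ← Finset.sum_filter_add_sum_filter_not (E.filter (fun e => i ∉ e)) (fun e => j ∈ e)]
    simp only [Finset.filter_filter]
    ring
  rw [hsplit, Finset.mul_sum, Finset.mul_sum, Finset.mul_sum]
  have h1 : ∑ e ∈ E.filter (fun e => i ∈ e ∧ j ∈ e), ∏ v ∈ e, y v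
      = ∑ e ∈ E.filter (fun e => i ∈ e ∧ j ∈ e), y i * y j * ∏ v ∈ (e.erase i).erase j, y v := by
    apply Finset.sum_congr rfl
    intro e he
    simp only [Finset.mem_filter] at he
    rw [← Finset.mul_prod_erase e y he.2.1, ← Finset.mul_prod_erase (e.erase i) y
      (Finset.mem_erase.2 ⟨(Ne.symm hij), he.2.2⟩)]
    ring
  have h2 : ∑ e ∈ E.filter (fun e => i ∈ e ∧ j ∉ e), ∏ v ∈ e, y v
      = ∑ e ∈ E.filter (fun e => i ∈ e ∧ j ∉ e), y i * ∏ v ∈ e.erase i, y v := by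
    apply Finset.sum_congr rfl
    intro e he
    simp only [Finset.mem_filter] at he
    rw [← Finset.mul_prod_erase e y he.2.1]
  have h3 : ∑ e ∈ E.filter (fun e => i ∉ e ∧ j ∈ e), ∏ v ∈ e, y v
      = ∑ e ∈ E.filter (fun e => i ∉ e ∧ j ∈ e), y j * ∏ v ∈ e.erase j, y v := by
    apply Finset.sum_congr rfl
    intro e he
    simp only [Finset.mem_filter] at he
    rw [← Finset.mul_prod_erase e y he.2.2]
  rw [h1, h2, h3]

lemma mem_of_leftCompressed {n : ℕ} {E : Finset (Finset (Fin n))} (hlc : LeftCompressed E)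
    {i j : Fin n} (hij : i ≤ j) {A : Finset (Fin n)} (hiA : i ∉ A) (hjA : j ∉ A)
    (hjE : insert j A ∈ E) : insert i A ∈ E := by
  apply hlc _ hjE
  rw [sort_insert_eq_orderedInsert_s7 hiA, sort_insert_eq_orderedInsert_s7 hjA]
  exact forall₂_orderedInsert _ (Finset.pairwise_sort _ _) i j hij

/-- For a left-compressed `G` with optimal weighting `x` of minimal support: if
`E_{i\j} = ∅` for supported `i < j`, then `x_i = x_j`. -/
theorem weight_eq_of_empty_diff {n r : ℕ} (E : Finset (Finset (Fin n)))
    (hE : ∀ e ∈ E, e.card = r) (hlc : LeftCompressed E)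
    (x : Fin n → ℝ) (hx : IsLegal x) (hopt : lagEval E x = lagrangian E)
    (hmin : ∀ y : Fin n → ℝ, IsLegal y →
      (univ.filter (fun i => y i ≠ 0)).card < (univ.filter (fun i => x i ≠ 0)).card →
      lagEval E y < lagrangian E) :
    ∀ i j : Fin n, i < j → x i ≠ 0 → x j ≠ 0 →
      (univ.powersetCard (r - 1)).filter
        (fun A => i ∉ A ∧ j ∉ A ∧ insert i A ∈ E ∧ insert j A ∉ E) = ∅ →
      x i = x j := by
  classical
  intro i j hij hxi hxj hempty
  have hijne : i ≠ j := ne_of_lt hij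
  set P := ∑ e ∈ E.filter (fun e => i ∈ e ∧ j ∈ e), ∏ v ∈ (e.erase i).erase j, x v with hP
  set Qi := ∑ e ∈ E.filter (fun e => i ∈ e ∧ j ∉ e), ∏ v ∈ e.erase i, x v with hQi
  set Qj := ∑ e ∈ E.filter (fun e => i ∉ e ∧ j ∈ e), ∏ v ∈ e.erase j, x v with hQj
  set R := ∑ e ∈ E.filter (fun e => i ∉ e ∧ j ∉ e), ∏ v ∈ e, x v with hR
  -- key evaluation for any weighting agreeing with x away from i, j
  have key : ∀ y : Fin n → ℝ, (∀ v, v ≠ i → v ≠ j → y v = x v) →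
      lagEval E y = y i * y j * P + y i * Qi + y j * Qj + R := by
    intro y hy
    rw [lagEval_decomp E i j hijne y]
    have e1 : ∀ e ∈ E.filter (fun e => i ∈ e ∧ j ∈ e),
        ∏ v ∈ (e.erase i).erase j, y v = ∏ v ∈ (e.erase i).erase j, x v := by
      intro e _
      apply Finset.prod_congr rfl
      intro v hv
      simp only [Finset.mem_erase] at hv
      exact hy v hv.2.1 hv.1
    have e2 : ∀ e ∈ E.filter (fun e => i ∈ e ∧ j ∉ e),
        ∏ v ∈ e.erase i, y v = ∏ v ∈ e.erase i, x v := by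
      intro e he
      simp only [Finset.mem_filter] at he
      apply Finset.prod_congr rfl
      intro v hv
      simp only [Finset.mem_erase] at hv
      exact hy v hv.1 (fun h => he.2.2 (h ▸ hv.2))
    have e3 : ∀ e ∈ E.filter (fun e => i ∉ e ∧ j ∈ e),
        ∏ v ∈ e.erase j, y v = ∏ v ∈ e.erase j, x v := by
      intro e he
      simp only [Finset.mem_filter] at he
      apply Finset.prod_congr rfl
      intro v hv
      simp only [Finset.mem_erase] at hv
      exact hy v (fun h => he.2.1 (h ▸ hv.2)) hv.1
    have e4 : ∀ e ∈ E.filter (fun e => i ∉ e ∧ j ∉ e),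
        ∏ v ∈ e, y v = ∏ v ∈ e, x v := by
      intro e he
      simp only [Finset.mem_filter] at he
      apply Finset.prod_congr rfl
      intro v hv
      exact hy v (fun h => he.2.1 (h ▸ hv)) (fun h => he.2.2 (h ▸ hv))
    rw [Finset.sum_congr rfl e1, Finset.sum_congr rfl e2, Finset.sum_congr rfl e3,
      Finset.sum_congr rfl e4]
  -- the two cross sums are equal
  have hforward : ∀ A : Finset (Fin n), A ∈ univ.powersetCard (r - 1) →
      i ∉ A → j ∉ A → insert i A ∈ E → insert j A ∈ E := by
    intro A hA h1 h2 h3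
    by_contra h4
    have : A ∈ (univ.powersetCard (r - 1)).filter
        (fun A => i ∉ A ∧ j ∉ A ∧ insert i A ∈ E ∧ insert j A ∉ E) :=
      Finset.mem_filter.2 ⟨hA, h1, h2, h3, h4⟩
    rw [hempty] at this
    exact absurd this (Finset.notMem_empty A)
  have hQ : Qi = Qj := by
    rw [hQi, hQj]
    apply Finset.sum_nbij' (fun e => insert j (e.erase i)) (fun e => insert i (e.erase j))
    · intro e he
      simp only [Finset.mem_filter] at he ⊢
      obtain ⟨heE, hie, hje⟩ := he
      have hiA : i ∉ e.erase i := Finset.notMem_erase i e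
      have hjA : j ∉ e.erase i := fun h => hje (Finset.mem_of_mem_erase h)
      have hins : insert i (e.erase i) = e := Finset.insert_erase hie
      have hcard : e.erase i ∈ univ.powersetCard (r - 1) := by
        rw [Finset.mem_powersetCard]
        exact ⟨Finset.subset_univ _, by rw [Finset.card_erase_of_mem hie, hE e heE]⟩
      have hmem : insert j (e.erase i) ∈ E := hforward _ hcard hiA hjA (by rw [hins]; exact heE)
      refine ⟨hmem, ?_, Finset.mem_insert_self j _⟩
      simp only [Finset.mem_insert]
      rintro (h | h)
      · exact hijne h
      · exact hiA h
    · intro e he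
      simp only [Finset.mem_filter] at he ⊢
      obtain ⟨heE, hie, hje⟩ := he
      have hiA : i ∉ e.erase j := fun h => hie (Finset.mem_of_mem_erase h)
      have hjA : j ∉ e.erase j := Finset.notMem_erase j e
      have hins : insert j (e.erase j) = e := Finset.insert_erase hje
      have hmem : insert i (e.erase j) ∈ E :=
        mem_of_leftCompressed hlc (le_of_lt hij) hiA hjA (by rw [hins]; exact heE)
      refine ⟨hmem, Finset.mem_insert_self i _, ?_⟩
      simp only [Finset.mem_insert]
      rintro (h | h)
      · exact hijne h.symm
      · exact hjA h
    · intro e he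
      simp only [Finset.mem_filter] at he
      rw [Finset.erase_insert (fun h => he.2.2 (Finset.mem_of_mem_erase h)),
        Finset.insert_erase he.2.1]
    · intro e he
      simp only [Finset.mem_filter] at he
      rw [Finset.erase_insert (fun h => he.2.1 (Finset.mem_of_mem_erase h)),
        Finset.insert_erase he.2.2]
    · intro e he
      simp only [Finset.mem_filter] at he
      rw [Finset.erase_insert (fun h => he.2.2 (Finset.mem_of_mem_erase h))]
  -- positivity facts
  have hxi' : 0 < x i := lt_of_le_of_ne (hx.1 i) (Ne.symm hxi)
  have hxj' : 0 < x j := lt_of_le_of_ne (hx.1 j) (Ne.symm hxj)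
  have hPnn : 0 ≤ P := Finset.sum_nonneg fun e _ => Finset.prod_nonneg fun v _ => hx.1 v
  -- sum lemma for updates
  have hsum : ∀ c d : ℝ, c + d = x i + x j →
      ∑ v, Function.update (Function.update x i c) j d v = 1 := by
    intro c d hcd
    have hisub : i ∈ univ \ {j} := by simp [hijne]
    rw [Finset.sum_update_of_mem (Finset.mem_univ j), Finset.sum_update_of_mem hisub]
    have h1 : ∑ v, x v = ∑ v ∈ univ \ {j}, x v + x j :=
      Finset.sum_eq_sum_sdiff_singleton_add (Finset.mem_univ j) x
    have h2 : ∑ v ∈ univ \ {j}, x v = ∑ v ∈ (univ \ {j}) \ {i}, x v + x i :=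
      Finset.sum_eq_sum_sdiff_singleton_add hisub x
    have hx2 := hx.2
    linarith
  rcases eq_or_lt_of_le hPnn with hP0 | hPpos
  · -- P = 0 : shift all weight of j to i, support drops, contradiction
    exfalso
    set y := Function.update (Function.update x i (x i + x j)) j 0 with hy
    have hyv : ∀ v, v ≠ i → v ≠ j → y v = x v := by
      intro v hvi hvj
      rw [hy, Function.update_of_ne hvj, Function.update_of_ne hvi]
    have hyi : y i = x i + x j := by
      rw [hy, Function.update_of_ne hijne, Function.update_self]
    have hyj : y j = 0 := by rw [hy, Function.update_self]
    have hyleg : IsLegal y := by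
      constructor
      · intro v
        by_cases hvj : v = j
        · rw [hvj, hyj]
        by_cases hvi : v = i
        · rw [hvi, hyi]; positivity
        · rw [hyv v hvi hvj]; exact hx.1 v
      · exact hsum _ _ (by ring)
    have hsupp : univ.filter (fun v => y v ≠ 0) = (univ.filter (fun v => x v ≠ 0)).erase j := by
      ext v
      simp only [Finset.mem_filter, Finset.mem_erase, Finset.mem_univ, true_and]
      by_cases hvj : v = j
      · subst hvj
        simp [hyj]
      by_cases hvi : v = i
      · subst hvi
        rw [hyi]
        constructor
        · intro _; exact ⟨hijne, hxi⟩
        · intro _; positivity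
      · rw [hyv v hvi hvj]
        tauto
    have hjmem : j ∈ univ.filter (fun v => x v ≠ 0) :=
      Finset.mem_filter.2 ⟨Finset.mem_univ j, hxj⟩
    have hcardlt : (univ.filter (fun v => y v ≠ 0)).card
        < (univ.filter (fun v => x v ≠ 0)).card := by
      rw [hsupp]
      exact Finset.card_erase_lt_of_mem hjmem
    have hlt := hmin y hyleg hcardlt
    have hvy := key y hyv
    have hvx := key x (fun v _ _ => rfl)
    rw [hyi, hyj] at hvy
    rw [← hP0] at hvx hvy
    rw [hQ] at hvx hvy
    rw [hopt] at hvx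
    rw [hvy] at hlt
    nlinarith [hlt, hvx]
  · -- P > 0 : averaging strictly improves unless x i = x j
    by_contra hne
    set m := (x i + x j) / 2 with hm
    set y := Function.update (Function.update x i m) j m with hy
    have hyv : ∀ v, v ≠ i → v ≠ j → y v = x v := by
      intro v hvi hvj
      rw [hy, Function.update_of_ne hvj, Function.update_of_ne hvi]
    have hyi : y i = m := by
      rw [hy, Function.update_of_ne hijne, Function.update_self]
    have hyj : y j = m := by rw [hy, Function.update_self]
    have hmpos : 0 < m := by rw [hm]; linarith
    have hyleg : IsLegal y := by
      constructor
      · intro v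
        by_cases hvj : v = j
        · rw [hvj, hyj]; linarith
        by_cases hvi : v = i
        · rw [hvi, hyi]; linarith
        · rw [hyv v hvi hvj]; exact hx.1 v
      · exact hsum _ _ (by rw [hm]; ring)
    have hvy := key y hyv
    have hvx := key x (fun v _ _ => rfl)
    rw [hyi, hyj] at hvy
    rw [hQ] at hvx hvy
    have hle : lagEval E y ≤ lagrangian E := lagEval_le_lagrangian E y hyleg
    rw [hopt] at hvx
    have hmm : x i * x j < m * m := by
      rw [hm]
      rcases lt_or_gt_of_ne hne with h | h <;> nlinarith [sq_nonneg (x i - x j)]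
    have hq : m * Qj + m * Qj = x i * Qj + x j * Qj := by rw [hm]; ring
    have hmul : x i * x j * P < m * m * P := mul_lt_mul_of_pos_right hmm hPpos
    linarith [hle, hvx, hvy, hq, hmul]
end

section
/- For positive integers m, t, r with m ≤ C(t,r) − 1, there exists a left-compressed r-uniform hypergraph G with m edges such that λ(G) = λ_m^r, the maximum Lagrangian over all r-graphs with m edges. -/
open Finset

/-- The evaluation of the Lagrangian polynomial of a hypergraph on ℕ at a weighting `x`. -/
noncomputable def lagEvalN (E : Finset (Finset ℕ)) (x : ℕ → ℝ) : ℝ :=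
  ∑ e ∈ E, ∏ i ∈ e, x i

/-- A legal weighting on ℕ: nonnegative, finitely supported, summing to 1. -/
def IsLegalN (x : ℕ → ℝ) : Prop :=
  (∀ i, 0 ≤ x i) ∧ ∃ s : Finset ℕ, (∀ i ∉ s, x i = 0) ∧ ∑ i ∈ s, x i = 1

/-- The Lagrangian of a hypergraph on ℕ. -/
noncomputable def lagrangianN (E : Finset (Finset ℕ)) : ℝ :=
  sSup {v | ∃ x, IsLegalN x ∧ lagEvalN E x = v}

/-- `E` is left-compressed: whenever the increasing enumeration of `f` is pointwise at most
that of an edge `e`, `f` is also an edge. -/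
def LeftCompressedN (E : Finset (Finset ℕ)) : Prop :=
  ∀ e ∈ E, ∀ f : Finset ℕ,
    List.Forall₂ (· ≤ ·) (f.sort (· ≤ ·)) (e.sort (· ≤ ·)) → f ∈ E

def CountLe (f e : Finset ℕ) : Prop :=
  ∀ c, (f.filter (fun x => c ≤ x)).card ≤ (e.filter (fun x => c ≤ x)).card

lemma countP_le_of_forall₂ (c : ℕ) {l₁ l₂ : List ℕ} (h : List.Forall₂ (· ≤ ·) l₁ l₂) :
    l₁.countP (fun x => c ≤ x) ≤ l₂.countP (fun x => c ≤ x) := by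
  induction h with
  | nil => simp
  | @cons a b as bs hab h ih =>
      simp only [List.countP_cons]
      by_cases hca : c ≤ a
      · simp [hca, le_trans hca hab]; omega
      · simp [hca]; split <;> omega

lemma forall₂_of_countP : ∀ (l₁ l₂ : List ℕ), l₁.Pairwise (· ≤ ·) → l₂.Pairwise (· ≤ ·) →
    l₁.length = l₂.length →
    (∀ c, l₁.countP (fun x => c ≤ x) ≤ l₂.countP (fun x => c ≤ x)) →
    List.Forall₂ (· ≤ ·) l₁ l₂ := by
  intro l₁
  induction l₁ with
  | nil => intro l₂ _ _ hlen _; cases l₂ with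
      | nil => exact List.Forall₂.nil
      | cons b bs => simp at hlen
  | cons a as ih =>
      intro l₂ hs1 hs2 hlen hc
      cases l₂ with
      | nil => simp at hlen
      | cons b bs =>
          have hab : a ≤ b := by
            by_contra hba
            push_neg at hba
            have h1 := hc a
            have hcnt_as : as.countP (fun x => decide (a ≤ x)) = as.length := by
              rw [List.countP_eq_length]
              intro x hx
              simpa using (List.pairwise_cons.mp hs1).1 x hx
            have hcnt_bs : bs.countP (fun x => decide (a ≤ x)) ≤ bs.length :=
              List.countP_le_length
            simp only [List.countP_cons] at h1
            have : ¬ (a ≤ b) := not_le.mpr hba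
            simp [this, hcnt_as] at h1
            simp at hlen
            omega
          refine List.Forall₂.cons hab (ih bs (List.pairwise_cons.mp hs1).2
            (List.pairwise_cons.mp hs2).2 (by simpa using hlen) ?_)
          intro c
          rcases le_or_gt c a with hca | hca
          · have hcb : c ≤ b := le_trans hca hab
            have h1 := hc c
            simp only [List.countP_cons] at h1
            simp [hca, hcb] at h1
            omega
          · rcases le_or_gt c b with hcb | hcb
            · -- all of bs ≥ b ≥ c
              have : bs.countP (fun x => decide (c ≤ x)) = bs.length := by
                rw [List.countP_eq_length]
                intro x hx
                simpa using le_trans hcb ((List.pairwise_cons.mp hs2).1 x hx)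
              rw [this]
              have : as.countP (fun x => decide (c ≤ x)) ≤ as.length :=
                List.countP_le_length
              simp at hlen
              omega
            · have h1 := hc c
              simp only [List.countP_cons] at h1
              simp [not_le.mpr hca, not_le.mpr hcb] at h1
              exact h1

lemma card_filter_eq_countP (f : Finset ℕ) (c : ℕ) :
    (f.filter (fun x => c ≤ x)).card = (f.sort (· ≤ ·)).countP (fun x => c ≤ x) := by
  rw [(f.sort_perm_toList (· ≤ ·)).countP_eq]
  have h1 : (f.filter (fun x => c ≤ x)).card =
      Multiset.countP (fun x => decide (c ≤ x)) f.val := by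
    rw [Multiset.countP_eq_card_filter]
    simp [Finset.card, Finset.filter_val]
  rw [h1, ← Multiset.coe_toList f.val, Multiset.coe_countP]
  refine List.countP_congr ?_
  intro x _
  simp

lemma countLe_iff (f e : Finset ℕ) (h : f.card = e.card) :
    List.Forall₂ (· ≤ ·) (f.sort (· ≤ ·)) (e.sort (· ≤ ·)) ↔ CountLe f e := by
  constructor
  · intro hf c
    rw [card_filter_eq_countP, card_filter_eq_countP]
    exact countP_le_of_forall₂ c hf
  · intro hcl
    refine forall₂_of_countP _ _ (f.pairwise_sort _) (e.pairwise_sort _) (by simp [h]) ?_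
    intro c
    rw [← card_filter_eq_countP, ← card_filter_eq_countP]
    exact hcl c

def LCc (E : Finset (Finset ℕ)) : Prop :=
  ∀ e ∈ E, ∀ f : Finset ℕ, f.card = e.card → CountLe f e → f ∈ E

def replV (i j : ℕ) (e : Finset ℕ) : Finset ℕ := insert i (e.erase j)

def ReplClosed (E : Finset (Finset ℕ)) : Prop :=
  ∀ e ∈ E, ∀ i j : ℕ, i < j → j ∈ e → i ∉ e → replV i j e ∈ E

lemma card_replV {i j : ℕ} {e : Finset ℕ} (hj : j ∈ e) (hi : i ∉ e) :
    (replV i j e).card = e.card := by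
  have hie : i ∉ e.erase j := fun h => hi (mem_of_mem_erase h)
  rw [replV, card_insert_of_notMem hie, card_erase_of_mem hj]
  have : 1 ≤ e.card := card_pos.mpr ⟨j, hj⟩
  omega

lemma sum_replV {i j : ℕ} {e : Finset ℕ} (hj : j ∈ e) (hi : i ∉ e) :
    (∑ v ∈ replV i j e, v) + j = (∑ v ∈ e, v) + i := by
  have hie : i ∉ e.erase j := fun h => hi (mem_of_mem_erase h)
  rw [replV, sum_insert hie]
  have := Finset.add_sum_erase e id hj
  simp only [id] at this
  omega

lemma countLe_step {f e : Finset ℕ} (hcard : f.card = e.card) (hcl : CountLe f e)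
    (hne : f ≠ e) :
    ∃ i j, i < j ∧ j ∈ e ∧ i ∉ e ∧ f.card = (replV i j e).card ∧ CountLe f (replV i j e) ∧
      (∑ v ∈ replV i j e, v) < ∑ v ∈ e, v := by
  have hef : (e \ f).Nonempty := by
    rw [sdiff_nonempty]
    intro hsub
    exact hne ((eq_of_subset_of_card_le hsub (le_of_eq hcard)).symm)
  have hfe : (f \ e).Nonempty := by
    rw [sdiff_nonempty]
    intro hsub
    exact hne (eq_of_subset_of_card_le hsub (le_of_eq hcard.symm))
  set j := (e \ f).max' hef with hjdef
  set i := (f \ e).max' hfe with hidef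
  have hjmem : j ∈ e \ f := max'_mem _ _
  have himem : i ∈ f \ e := max'_mem _ _
  have hje : j ∈ e := (mem_sdiff.mp hjmem).1
  have hjf : j ∉ f := (mem_sdiff.mp hjmem).2
  have hif : i ∈ f := (mem_sdiff.mp himem).1
  have hie : i ∉ e := (mem_sdiff.mp himem).2
  have hij : i < j := by
    rcases lt_trichotomy i j with h | h | h
    · exact h
    · exact absurd (h ▸ hje) hie
    · -- j < i : contradiction with CountLe at c = i
      exfalso
      have hsub : e.filter (fun x => i ≤ x) ⊂ f.filter (fun x => i ≤ x) := by
        constructor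
        · intro x hx
          rw [mem_filter] at hx ⊢
          refine ⟨?_, hx.2⟩
          by_contra hxf
          have hxef : x ∈ e \ f := mem_sdiff.mpr ⟨hx.1, hxf⟩
          have := le_max' _ x hxef
          omega
        · intro hsub'
          have : i ∈ e.filter (fun x => i ≤ x) := hsub' (mem_filter.mpr ⟨hif, le_refl i⟩)
          exact hie (mem_filter.mp this).1
      have := card_lt_card hsub
      have := hcl i
      omega
  refine ⟨i, j, hij, hje, hie, by rw [hcard, card_replV hje hie], ?_, ?_⟩
  · intro c
    have hie' : i ∉ e.erase j := fun h => hie (mem_of_mem_erase h)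
    have hfe' : filter (fun x => c ≤ x) (replV i j e)
        = if c ≤ i then insert i ((e.filter (fun x => c ≤ x)).erase j)
          else (e.filter (fun x => c ≤ x)).erase j := by
      rw [replV, filter_insert, filter_erase]
    by_cases hci : c ≤ i
    · -- c ≤ i < j
      rw [hfe', if_pos hci]
      have hjmemf : j ∈ e.filter (fun x => c ≤ x) := mem_filter.mpr ⟨hje, by omega⟩
      have hinot : i ∉ (e.filter (fun x => c ≤ x)).erase j := by
        intro h
        exact hie (mem_filter.mp (mem_of_mem_erase h)).1
      rw [card_insert_of_notMem hinot, card_erase_of_mem hjmemf]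
      have h1 : 1 ≤ (e.filter (fun x => c ≤ x)).card := card_pos.mpr ⟨j, hjmemf⟩
      have := hcl c
      omega
    · rw [hfe', if_neg hci]
      push_neg at hci
      by_cases hcj : c ≤ j
      · -- i < c ≤ j : f.filter ⊆ (e.filter).erase j
        have hsub : f.filter (fun x => c ≤ x) ⊆ (e.filter (fun x => c ≤ x)).erase j := by
          intro x hx
          rw [mem_filter] at hx
          rw [mem_erase, mem_filter]
          have hxf := hx.1
          have hcx := hx.2
          have hxe : x ∈ e := by
            by_contra hxe
            have := le_max' _ x (mem_sdiff.mpr ⟨hxf, hxe⟩)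
            omega
          exact ⟨fun h => hjf (h ▸ hxf), hxe, hcx⟩
        exact card_le_card hsub
      · -- j < c
        push_neg at hcj
        rw [erase_eq_of_notMem (fun h => by
          have := (mem_filter.mp h).2; omega)]
        exact hcl c
  · have := sum_replV hje hie
    omega

lemma mem_of_countLe {E : Finset (Finset ℕ)} (hE : ReplClosed E) :
    ∀ n : ℕ, ∀ e f : Finset ℕ, (∑ v ∈ e, v) ≤ n → e ∈ E → f.card = e.card → CountLe f e →
      f ∈ E := by
  intro n
  induction n using Nat.strong_induction_on with
  | _ n ih =>
    intro e f hsum he hcard hcl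
    by_cases hfe : f = e
    · exact hfe ▸ he
    · obtain ⟨i, j, hij, hje, hie, hcard', hcl', hlt⟩ := countLe_step hcard hcl hfe
      have hg : replV i j e ∈ E := hE e he i j hij hje hie
      rcases n with _ | n
      · omega
      · exact ih (∑ v ∈ replV i j e, v) (by omega) _ f (le_refl _) hg hcard' hcl'

def cmap (i j : ℕ) (E : Finset (Finset ℕ)) (e : Finset ℕ) : Finset ℕ :=
  if j ∈ e ∧ i ∉ e ∧ replV i j e ∉ E then replV i j e else e

def comp (i j : ℕ) (E : Finset (Finset ℕ)) : Finset (Finset ℕ) := E.image (cmap i j E)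

def Stable (E : Finset (Finset ℕ)) : Prop := ∀ i j : ℕ, i < j → comp i j E = E

lemma replV_inj {i j : ℕ} {e₁ e₂ : Finset ℕ} (h1 : j ∈ e₁) (h2 : i ∉ e₁) (h3 : j ∈ e₂)
    (h4 : i ∉ e₂) (heq : replV i j e₁ = replV i j e₂) : e₁ = e₂ := by
  have g1 : i ∉ e₁.erase j := fun h => h2 (mem_of_mem_erase h)
  have g2 : i ∉ e₂.erase j := fun h => h4 (mem_of_mem_erase h)
  have : e₁.erase j = e₂.erase j := by
    have := congrArg (fun s => Finset.erase s i) heq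
    simpa [replV, erase_insert g1, erase_insert g2] using this
  have := congrArg (fun s => insert j s) this
  simpa [insert_erase h1, insert_erase h3] using this

lemma jmem_replV {i j : ℕ} (hij : i ≠ j) (e : Finset ℕ) : j ∉ replV i j e := by
  rw [replV, mem_insert]
  rintro (h | h)
  · exact hij h.symm
  · exact (notMem_erase j e) h

lemma cmap_injOn (i j : ℕ) (E : Finset (Finset ℕ)) :
    ∀ e₁ ∈ E, ∀ e₂ ∈ E, cmap i j E e₁ = cmap i j E e₂ → e₁ = e₂ := by
  intro e₁ h₁ e₂ h₂ heq
  unfold cmap at heq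
  split at heq <;> split at heq
  · next c1 c2 => exact replV_inj c1.1 c1.2.1 c2.1 c2.2.1 heq
  · next c1 c2 => exact absurd (heq ▸ h₂) c1.2.2
  · next c1 c2 => exact absurd (heq ▸ h₁) c2.2.2
  · exact heq

lemma card_comp (i j : ℕ) (E : Finset (Finset ℕ)) : (comp i j E).card = E.card :=
  card_image_of_injOn (fun e₁ h₁ e₂ h₂ => cmap_injOn i j E e₁ h₁ e₂ h₂)

lemma card_cmap (i j : ℕ) (E : Finset (Finset ℕ)) (e : Finset ℕ) :
    (cmap i j E e).card = e.card := by
  unfold cmap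
  split
  · next c =>
      have hie : i ∉ e.erase j := fun h => c.2.1 (mem_of_mem_erase h)
      rw [replV, card_insert_of_notMem hie, card_erase_of_mem c.1]
      have : 1 ≤ e.card := card_pos.mpr ⟨j, c.1⟩
      omega
  · rfl

lemma uniform_comp {r i j : ℕ} {E : Finset (Finset ℕ)} (h : ∀ e ∈ E, e.card = r) :
    ∀ e ∈ comp i j E, e.card = r := by
  intro e he
  obtain ⟨e', he', rfl⟩ := mem_image.mp he
  rw [card_cmap]
  exact h e' he'

lemma stable_replClosed {E : Finset (Finset ℕ)} (hS : Stable E) :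
    ∀ e ∈ E, ∀ i j : ℕ, i < j → j ∈ e → i ∉ e → replV i j e ∈ E := by
  intro e he i j hij hje hie
  by_contra hrepl
  have : cmap i j E e = replV i j e := by
    unfold cmap
    rw [if_pos ⟨hje, hie, hrepl⟩]
  have hmem : replV i j e ∈ comp i j E := this ▸ mem_image_of_mem _ he
  rw [hS i j hij] at hmem
  exact hrepl hmem

lemma weight_comp_lt {i j : ℕ} (hij : i < j) {E : Finset (Finset ℕ)}
    (hne : comp i j E ≠ E) :
    (∑ e ∈ comp i j E, ∑ v ∈ e, v) < ∑ e ∈ E, ∑ v ∈ e, v := by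
  rw [comp, sum_image (fun e₁ h₁ e₂ h₂ => cmap_injOn i j E e₁ h₁ e₂ h₂)]
  have hex : ∃ e ∈ E, cmap i j E e ≠ e := by
    by_contra h
    push_neg at h
    exact hne (by rw [comp, image_congr (fun e he => h e he)]; exact image_id)
  obtain ⟨e₀, he₀, hne₀⟩ := hex
  refine sum_lt_sum (fun e he => ?_) ⟨e₀, he₀, ?_⟩
  · unfold cmap
    split
    · next c =>
        have hie : i ∉ e.erase j := fun h => c.2.1 (mem_of_mem_erase h)
        rw [replV, sum_insert hie]
        have := Finset.add_sum_erase e id c.1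
        simp only [id] at this
        omega
    · exact le_refl _
  · have hcond : j ∈ e₀ ∧ i ∉ e₀ ∧ replV i j e₀ ∉ E := by
      by_contra h
      exact hne₀ (by unfold cmap; rw [if_neg h])
    have hmap : cmap i j E e₀ = replV i j e₀ := by unfold cmap; rw [if_pos hcond]
    rw [hmap]
    have hie : i ∉ e₀.erase j := fun h => hcond.2.1 (mem_of_mem_erase h)
    rw [replV, sum_insert hie]
    have := Finset.add_sum_erase e₀ id hcond.1
    simp only [id] at this
    omega

-- basic lagrangian lemmas
lemma legal_x0 : IsLegalN (fun k => if k = 0 then 1 else 0) := by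
  refine ⟨fun i => by positivity, {0}, fun i hi => ?_, by simp⟩
  simp only [mem_singleton] at hi
  simp [hi]

lemma lagSet_nonempty (E : Finset (Finset ℕ)) :
    {v | ∃ x, IsLegalN x ∧ lagEvalN E x = v}.Nonempty :=
  ⟨_, ⟨_, legal_x0, rfl⟩⟩

lemma legal_le_one {x : ℕ → ℝ} (hx : IsLegalN x) (v : ℕ) : x v ≤ 1 := by
  obtain ⟨hx0, s, hs0, hs1⟩ := hx
  by_cases hv : v ∈ s
  · calc x v ≤ ∑ k ∈ s, x k := single_le_sum (fun k _ => hx0 k) hv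
    _ = 1 := hs1
  · rw [hs0 v hv]; norm_num

lemma lagEval_le_card_s9 {E : Finset (Finset ℕ)} {x : ℕ → ℝ} (hx : IsLegalN x) :
    lagEvalN E x ≤ E.card := by
  rw [lagEvalN]
  calc ∑ e ∈ E, ∏ i ∈ e, x i ≤ ∑ e ∈ E, 1 :=
        sum_le_sum (fun e _ => prod_le_one (fun v _ => hx.1 v) (fun v _ => legal_le_one hx v))
    _ = E.card := by simp

lemma lagSet_bddAbove (E : Finset (Finset ℕ)) :
    BddAbove {v | ∃ x, IsLegalN x ∧ lagEvalN E x = v} := by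
  refine ⟨E.card, fun v hv => ?_⟩
  obtain ⟨x, hx, rfl⟩ := hv
  exact lagEval_le_card_s9 hx

lemma lagrangianN_le_card (E : Finset (Finset ℕ)) : lagrangianN E ≤ E.card := by
  rw [lagrangianN]
  refine csSup_le (lagSet_nonempty E) ?_
  rintro v ⟨x, hx, rfl⟩
  exact lagEval_le_card_s9 hx

-- core inequality
lemma lag_le_comp {i j : ℕ} (hij : i < j) (E : Finset (Finset ℕ)) :
    lagrangianN E ≤ lagrangianN (comp i j E) := by
  have hij' : i ≠ j := Nat.ne_of_lt hij
  refine csSup_le (lagSet_nonempty E) ?_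
  rintro v ⟨x, hx, rfl⟩
  obtain ⟨hx0, s, hs0, hs1⟩ := hx
  set y : ℕ → ℝ := fun k => if k = i then max (x i) (x j) else if k = j then min (x i) (x j)
    else x k with hy
  have hyi : y i = max (x i) (x j) := by simp [hy]
  have hyj : y j = min (x i) (x j) := by simp [hy, hij'.symm]
  have hyk : ∀ k, k ≠ i → k ≠ j → y k = x k := by
    intro k h1 h2; simp [hy, h1, h2]
  have hy0 : ∀ k, 0 ≤ y k := by
    intro k
    by_cases h1 : k = i
    · rw [h1, hyi]; exact le_max_of_le_left (hx0 i)
    · by_cases h2 : k = j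
      · rw [h2, hyj]; exact le_min (hx0 i) (hx0 j)
      · rw [hyk k h1 h2]; exact hx0 k
  have hsumij : y i + y j = x i + x j := by
    rw [hyi, hyj]
    rcases le_total (x i) (x j) with h | h
    · rw [max_eq_right h, min_eq_left h]; try ring
    · rw [max_eq_left h, min_eq_right h]; try ring
  have hylegal : IsLegalN y := by
    refine ⟨hy0, insert i (insert j s), ?_, ?_⟩
    · intro k hk
      simp only [mem_insert, not_or] at hk
      rw [hyk k hk.1 hk.2.1]
      exact hs0 k hk.2.2
    · set s' := insert i (insert j s) with hs'
      have his' : i ∈ s' := mem_insert_self _ _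
      have hjs' : j ∈ s'.erase i := by
        rw [mem_erase]
        exact ⟨hij'.symm, mem_insert_of_mem (mem_insert_self _ _)⟩
      have key : ∀ z : ℕ → ℝ, ∑ k ∈ s', z k = z i + (z j + ∑ k ∈ (s'.erase i).erase j, z k) := by
        intro z
        rw [Finset.add_sum_erase _ z hjs', Finset.add_sum_erase _ z his']
      rw [key y]
      have hrest : ∑ k ∈ (s'.erase i).erase j, y k = ∑ k ∈ (s'.erase i).erase j, x k := by
        refine sum_congr rfl (fun k hk => ?_)
        rw [mem_erase, mem_erase] at hk
        exact hyk k hk.2.1 hk.1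
      rw [hrest]
      have : x i + (x j + ∑ k ∈ (s'.erase i).erase j, x k) = 1 := by
        rw [← key x]
        rw [← hs1]
        exact (sum_subset (fun k hk => mem_insert_of_mem (mem_insert_of_mem hk))
          (fun k _ hk => hs0 k hk)).symm
      linarith [hsumij, this]
  refine le_trans ?_ (le_csSup (lagSet_bddAbove _) ⟨y, hylegal, rfl⟩)
  -- main combinatorial inequality
  rw [lagEvalN, lagEvalN, comp, sum_image (fun a ha b hb => cmap_injOn i j E a ha b hb)]
  rw [← sub_nonneg, ← sum_sub_distrib]
  set g : Finset ℕ → ℝ := fun e => (∏ v ∈ cmap i j E e, y v) - ∏ v ∈ e, x v with hg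
  show 0 ≤ ∑ e ∈ E, g e
  classical
  set P : Finset ℕ → Prop := fun e => j ∈ e ∧ i ∉ e ∧ replV i j e ∈ E with hP
  have hprod_eq : ∀ e : Finset ℕ, i ∉ e → j ∉ e → ∏ v ∈ e, y v = ∏ v ∈ e, x v := by
    intro e h1 h2
    exact prod_congr rfl (fun v hv => hyk v (fun h => h1 (h ▸ hv)) (fun h => h2 (h ▸ hv)))
  have hgB1 : ∀ e ∈ E.filter P, g e = (y j - x j) * ∏ v ∈ e.erase j, x v := by
    intro e he
    rw [mem_filter] at he
    obtain ⟨heE, hje, hie, hrep⟩ := he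
    have hcm : cmap i j E e = e := by
      rw [cmap, if_neg]; intro h; exact h.2.2 hrep
    rw [hg]
    simp only [hcm]
    have h1 : ∏ v ∈ e, y v = y j * ∏ v ∈ e.erase j, y v := (mul_prod_erase e y hje).symm
    have h2 : ∏ v ∈ e, x v = x j * ∏ v ∈ e.erase j, x v := (mul_prod_erase e x hje).symm
    have h3 : ∏ v ∈ e.erase j, y v = ∏ v ∈ e.erase j, x v :=
      hprod_eq _ (fun h => hie (mem_of_mem_erase h)) (notMem_erase j e)
    rw [h1, h2, h3]; ring
  have hgRep : ∀ e ∈ E.filter P, g (replV i j e) = (y i - x i) * ∏ v ∈ e.erase j, x v := by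
    intro e he
    rw [mem_filter] at he
    obtain ⟨heE, hje, hie, hrep⟩ := he
    have hia : i ∉ e.erase j := fun h => hie (mem_of_mem_erase h)
    have hja : j ∉ replV i j e := jmem_replV hij' e
    have hcm : cmap i j E (replV i j e) = replV i j e := by
      rw [cmap, if_neg]; intro h; exact hja h.1
    have hima : i ∈ replV i j e := mem_insert_self _ _
    have herase : (replV i j e).erase i = e.erase j := by rw [replV, erase_insert hia]
    rw [hg]
    simp only [hcm]
    have h1 : ∏ v ∈ replV i j e, y v = y i * ∏ v ∈ (replV i j e).erase i, y v :=
      (mul_prod_erase _ y hima).symm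
    have h2 : ∏ v ∈ replV i j e, x v = x i * ∏ v ∈ (replV i j e).erase i, x v :=
      (mul_prod_erase _ x hima).symm
    have h3 : ∏ v ∈ (replV i j e).erase i, y v = ∏ v ∈ (replV i j e).erase i, x v := by
      rw [herase]
      exact hprod_eq _ hia (notMem_erase j e)
    rw [h1, h2, h3, herase]; ring
  have hgNB : ∀ e ∈ E.filter (fun e => ¬ P e), 0 ≤ g e := by
    intro e he
    rw [mem_filter] at he
    obtain ⟨heE, hnp⟩ := he
    by_cases hje : j ∈ e
    · by_cases hie : i ∈ e
      · -- both: g e = 0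
        have hcm : cmap i j E e = e := by rw [cmap, if_neg]; intro h; exact h.2.1 hie
        have hji : j ∈ e.erase i := mem_erase.mpr ⟨hij'.symm, hje⟩
        have h1 : ∏ v ∈ e, y v = y i * (y j * ∏ v ∈ (e.erase i).erase j, y v) := by
          rw [← mul_prod_erase _ y hie, ← mul_prod_erase _ y hji]
        have h2 : ∏ v ∈ e, x v = x i * (x j * ∏ v ∈ (e.erase i).erase j, x v) := by
          rw [← mul_prod_erase _ x hie, ← mul_prod_erase _ x hji]
        have h3 : ∏ v ∈ (e.erase i).erase j, y v = ∏ v ∈ (e.erase i).erase j, x v :=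
          hprod_eq _ (fun h => (notMem_erase i e) (mem_of_mem_erase h)) (notMem_erase j _)
        have h4 : y i * y j = x i * x j := by
          rw [hyi, hyj]
          rcases le_total (x i) (x j) with h | h
          · rw [max_eq_right h, min_eq_left h]; try ring
          · rw [max_eq_left h, min_eq_right h]; try ring
        rw [hg]
        simp only [hcm]
        rw [h1, h2, h3]
        have : y i * (y j * ∏ v ∈ (e.erase i).erase j, x v)
            = x i * (x j * ∏ v ∈ (e.erase i).erase j, x v) := by
          rw [← mul_assoc, ← mul_assoc, h4]
        rw [this]; simp
      · -- j ∈ e, i ∉ e, repl ∉ E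
        have hrep : replV i j e ∉ E := fun h => hnp ⟨hje, hie, h⟩
        have hcm : cmap i j E e = replV i j e := by rw [cmap, if_pos ⟨hje, hie, hrep⟩]
        have hia : i ∉ e.erase j := fun h => hie (mem_of_mem_erase h)
        have herase : (replV i j e).erase i = e.erase j := by rw [replV, erase_insert hia]
        have hima : i ∈ replV i j e := mem_insert_self _ _
        rw [hg]
        simp only [hcm]
        have h1 : ∏ v ∈ replV i j e, y v = y i * ∏ v ∈ e.erase j, y v := by
          rw [← mul_prod_erase _ y hima, herase]
        have h2 : ∏ v ∈ e, x v = x j * ∏ v ∈ e.erase j, x v := (mul_prod_erase e x hje).symm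
        have h3 : ∏ v ∈ e.erase j, y v = ∏ v ∈ e.erase j, x v :=
          hprod_eq _ hia (notMem_erase j e)
        rw [h1, h2, h3]
        have hyx : x j ≤ y i := hyi ▸ le_max_right _ _
        have hpn : 0 ≤ ∏ v ∈ e.erase j, x v := prod_nonneg (fun v _ => hx0 v)
        nlinarith
    · -- j ∉ e
      have hcm : cmap i j E e = e := by rw [cmap, if_neg]; intro h; exact hje h.1
      rw [hg]
      simp only [hcm]
      by_cases hie : i ∈ e
      · have h1 : ∏ v ∈ e, y v = y i * ∏ v ∈ e.erase i, y v := (mul_prod_erase e y hie).symm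
        have h2 : ∏ v ∈ e, x v = x i * ∏ v ∈ e.erase i, x v := (mul_prod_erase e x hie).symm
        have h3 : ∏ v ∈ e.erase i, y v = ∏ v ∈ e.erase i, x v :=
          hprod_eq _ (notMem_erase i e) (fun h => hje (mem_of_mem_erase h))
        rw [h1, h2, h3]
        have hyx : x i ≤ y i := hyi ▸ le_max_left _ _
        have hpn : 0 ≤ ∏ v ∈ e.erase i, x v := prod_nonneg (fun v _ => hx0 v)
        nlinarith
      · rw [hprod_eq e hie hje]; simp
  -- sum manipulation
  rw [← sum_filter_add_sum_filter_not E P g]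
  have himg : (E.filter P).image (replV i j) ⊆ E.filter (fun e => ¬ P e) := by
    intro a ha
    obtain ⟨e, he, rfl⟩ := mem_image.mp ha
    rw [mem_filter] at he ⊢
    refine ⟨he.2.2.2, fun h => (jmem_replV hij' e) h.1⟩
  have hinj : ∀ a ∈ E.filter P, ∀ b ∈ E.filter P, replV i j a = replV i j b → a = b := by
    intro a ha b hb h
    rw [mem_filter] at ha hb
    exact replV_inj ha.2.1 ha.2.2.1 hb.2.1 hb.2.2.1 h
  have step1 : ∑ a ∈ (E.filter P).image (replV i j), g a ≤ ∑ e ∈ E.filter (fun e => ¬ P e), g e :=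
    sum_le_sum_of_subset_of_nonneg himg (fun e he _ => hgNB e he)
  have step2 : ∑ a ∈ (E.filter P).image (replV i j), g a = ∑ e ∈ E.filter P, g (replV i j e) :=
    sum_image hinj
  have step3 : ∑ e ∈ E.filter P, g (replV i j e) = - ∑ e ∈ E.filter P, g e := by
    rw [← sum_neg_distrib]
    refine sum_congr rfl (fun e he => ?_)
    rw [hgRep e he, hgB1 e he]
    have : y i - x i = -(y j - x j) := by linarith [hsumij]
    rw [this]; ring
  have hfin := step1
  rw [step2, step3] at hfin
  linarith

lemma filter_range_card (c n : ℕ) : ((range n).filter (fun x => c ≤ x)).card = n - c := by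
  have : (range n).filter (fun x => c ≤ x) = Ico c n := by
    ext x
    simp [mem_filter, mem_range, mem_Ico, and_comm]
  rw [this, Nat.card_Ico]

lemma edge_bound {m r : ℕ} {E : Finset (Finset ℕ)} (hrpos : 0 < r)
    (hu : ∀ e ∈ E, e.card = r) (hc : E.card = m) (hLC : LCc E) :
    ∀ e ∈ E, ∀ v ∈ e, v + 2 ≤ m + r := by
  intro e he v hv
  have hm1 : 1 ≤ m := hc ▸ card_pos.mpr ⟨e, he⟩
  by_cases hvr : v + 1 ≤ r
  · omega
  · push_neg at hvr
    -- r ≤ v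
    have hrv : r ≤ v := by omega
    have hmem : ∀ k ∈ Icc (r - 1) v, insert k (range (r - 1)) ∈ E := by
      intro k hk
      rw [mem_Icc] at hk
      have hknr : k ∉ range (r - 1) := by simp [mem_range]; omega
      refine hLC e he _ ?_ ?_
      · rw [card_insert_of_notMem hknr, card_range, hu e he]; omega
      · intro c
        have hfi : (insert k (range (r - 1))).filter (fun x => c ≤ x)
            = if c ≤ k then insert k ((range (r - 1)).filter (fun x => c ≤ x))
              else (range (r - 1)).filter (fun x => c ≤ x) := filter_insert _ _ _
        have hknf : k ∉ (range (r - 1)).filter (fun x => c ≤ x) :=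
          fun h => hknr (mem_filter.mp h).1
        have hA : r - c ≤ (e.filter (fun x => c ≤ x)).card := by
          have hsplit := card_filter_add_card_filter_not (s := e)
            (p := fun x => c ≤ x)
          have hsub : e.filter (fun x => ¬ c ≤ x) ⊆ range c := by
            intro x hx
            rw [mem_filter] at hx
            rw [mem_range]; omega
          have := card_le_card hsub
          rw [card_range] at this
          rw [hu e he] at hsplit
          omega
        by_cases hck : c ≤ k
        · rw [hfi, if_pos hck, card_insert_of_notMem hknf, filter_range_card]
          by_cases hcr : c ≤ r - 1
          · omega
          · have hvm : v ∈ e.filter (fun x => c ≤ x) := mem_filter.mpr ⟨hv, by omega⟩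
            have : 1 ≤ (e.filter (fun x => c ≤ x)).card := card_pos.mpr ⟨v, hvm⟩
            omega
        · rw [hfi, if_neg hck, filter_range_card]
          omega
    have hinj : ∀ k₁ ∈ Icc (r - 1) v, ∀ k₂ ∈ Icc (r - 1) v,
        insert k₁ (range (r - 1)) = insert k₂ (range (r - 1)) → k₁ = k₂ := by
      intro k₁ h₁ k₂ h₂ heq
      rw [mem_Icc] at h₁ h₂
      have : k₁ ∈ insert k₂ (range (r - 1)) := heq ▸ mem_insert_self _ _
      rw [mem_insert, mem_range] at this
      rcases this with h | h
      · exact h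
      · omega
    have hcard := card_le_card_of_injOn _ hmem hinj
    rw [Nat.card_Icc, hc] at hcard
    omega

lemma replClosed_LCc {E : Finset (Finset ℕ)} (hE : ReplClosed E) : LCc E := by
  intro e he f hcard hcl
  exact mem_of_countLe hE (∑ v ∈ e, v) e f (le_refl _) he hcard hcl

lemma exists_stable {r : ℕ} : ∀ n (F : Finset (Finset ℕ)), (∑ e ∈ F, ∑ v ∈ e, v) ≤ n →
    (∀ e ∈ F, e.card = r) → ∃ G, Stable G ∧ (∀ e ∈ G, e.card = r) ∧ G.card = F.card ∧
      lagrangianN F ≤ lagrangianN G := by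
  intro n
  induction n using Nat.strong_induction_on with
  | _ n ih =>
    intro F hw hu
    by_cases hst : Stable F
    · exact ⟨F, hst, hu, rfl, le_refl _⟩
    · rw [Stable] at hst
      push_neg at hst
      obtain ⟨i, j, hij, hne⟩ := hst
      have hlt := weight_comp_lt hij hne
      obtain ⟨G, h1, h2, h3, h4⟩ := ih (∑ e ∈ comp i j F, ∑ v ∈ e, v) (by omega) _
        (le_refl _) (uniform_comp hu)
      exact ⟨G, h1, h2, by rw [h3, card_comp], le_trans (lag_le_comp hij F) h4⟩

/-- Talbot: for `m ≤ C(t,r) − 1` there is a left-compressed `r`-graph with `m` edges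
attaining the maximum Lagrangian `λ_m^r` over all `r`-graphs with `m` edges. -/
theorem exists_left_compressed_extremal {m t r : ℕ}
    (hm : 0 < m) (ht : 0 < t) (hr : 0 < r) (hmt : m + 1 ≤ t.choose r) :
    ∃ E : Finset (Finset ℕ), (∀ e ∈ E, e.card = r) ∧ E.card = m ∧ LeftCompressedN E ∧
      lagrangianN E = sSup {v | ∃ F : Finset (Finset ℕ),
        (∀ e ∈ F, e.card = r) ∧ F.card = m ∧ lagrangianN F = v} := by
  classical
  have hmle : m ≤ ((range t).powersetCard r).card := by
    rw [card_powersetCard, card_range]; omega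
  obtain ⟨F₀, hF₀sub, hF₀card⟩ := exists_subset_card_eq hmle
  have hF₀uni : ∀ e ∈ F₀, e.card = r := fun e he => (mem_powersetCard.mp (hF₀sub he)).2
  set T : Set ℝ := {v | ∃ G : Finset (Finset ℕ), (∀ e ∈ G, e.card = r) ∧ G.card = m ∧
    ReplClosed G ∧ lagrangianN G = v} with hT
  have hstep : ∀ F : Finset (Finset ℕ), (∀ e ∈ F, e.card = r) → F.card = m →
      ∃ G, (∀ e ∈ G, e.card = r) ∧ G.card = m ∧ ReplClosed G ∧
        lagrangianN F ≤ lagrangianN G := by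
    intro F hu hc
    obtain ⟨G, h1, h2, h3, h4⟩ := exists_stable _ F (le_refl _) hu
    exact ⟨G, h2, by rw [h3, hc], stable_replClosed h1, h4⟩
  have hTne : T.Nonempty := by
    obtain ⟨G, h1, h2, h3, _⟩ := hstep F₀ hF₀uni hF₀card
    exact ⟨_, G, h1, h2, h3, rfl⟩
  have hTfin : T.Finite := by
    refine Set.Finite.subset (Set.Finite.image lagrangianN
      ((((range (m + r - 1)).powerset.powerset : Finset (Finset (Finset ℕ))) : Set _).toFinite))
      ?_
    rintro v ⟨G, h1, h2, h3, rfl⟩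
    refine ⟨G, ?_, rfl⟩
    have hmemG : G ∈ (range (m + r - 1)).powerset.powerset := by
      rw [mem_powerset]
      intro e heG
      rw [mem_powerset]
      intro w hw
      rw [mem_range]
      have := edge_bound hr h1 h2 (replClosed_LCc h3) e heG w hw
      omega
    exact Finset.mem_coe.mpr hmemG
  have hmax := hTne.csSup_mem hTfin
  obtain ⟨G, hGu, hGc, hGr, hGl⟩ := hmax
  have hGLC : LCc G := replClosed_LCc hGr
  refine ⟨G, hGu, hGc, ?_, ?_⟩
  · intro e he f hfor
    have hlen : f.card = e.card := by
      have := List.Forall₂.length_eq hfor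
      rwa [Finset.length_sort, Finset.length_sort] at this
    exact hGLC e he f hlen ((countLe_iff f e hlen).mp hfor)
  · have hSb : BddAbove {v | ∃ F : Finset (Finset ℕ),
        (∀ e ∈ F, e.card = r) ∧ F.card = m ∧ lagrangianN F = v} := by
      refine ⟨(m : ℝ), fun v hv => ?_⟩
      obtain ⟨F, _, hFc, rfl⟩ := hv
      have := lagrangianN_le_card F
      rw [hFc] at this
      exact this
    have hTb : BddAbove T := hTfin.bddAbove
    apply le_antisymm
    · exact le_csSup hSb ⟨G, hGu, hGc, rfl⟩
    · refine csSup_le ⟨lagrangianN F₀, F₀, hF₀uni, hF₀card, rfl⟩ ?_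
      rintro v ⟨F, h1, h2, rfl⟩
      obtain ⟨G', g1, g2, g3, g4⟩ := hstep F h1 h2
      refine le_trans g4 ?_
      rw [hGl]
      exact le_csSup hTb ⟨G', g1, g2, g3, rfl⟩
end

section
/- There are exactly two left-compressed r-uniform hypergraphs on vertex set [t] with C(t,r) − 3 edges: the complement in [t]^(r) of {(t−r+1)(t−r+2)···t, (t−r)(t−r+2)···t, (t−r)(t−r+1)(t−r+3)···t}, and the complement of {(t−r+1)(t−r+2)···t, (t−r)(t−r+2)···t, (t−r−1)(t−r+2)···t} (assuming t ≥ r+2). -/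
open Finset

/-- `E` is left-compressed on the vertex set `V`: whenever `f ⊆ V` and the increasing
enumeration of `f` is pointwise at most that of an edge `e`, `f` is also an edge. -/
def LeftCompressedOn (V : Finset ℕ) (E : Finset (Finset ℕ)) : Prop :=
  ∀ e ∈ E, ∀ f : Finset ℕ, f ⊆ V →
    List.Forall₂ (· ≤ ·) (f.sort (· ≤ ·)) (e.sort (· ≤ ·)) → f ∈ E

namespace LCAux
open List

lemma forall2_antisymm : ∀ {l₁ l₂ : List ℕ}, Forall₂ (· ≤ ·) l₁ l₂ →
    Forall₂ (· ≤ ·) l₂ l₁ → l₁ = l₂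
  | [], [], _, _ => rfl
  | a :: l₁, b :: l₂, Forall₂.cons h₁ t₁, Forall₂.cons h₂ t₂ => by
    rw [le_antisymm h₁ h₂, forall2_antisymm t₁ t₂]

lemma range'_le_sorted : ∀ {l : List ℕ} {c : ℕ}, l.Pairwise (· < ·) → (∀ x ∈ l, c ≤ x) →
    Forall₂ (· ≤ ·) (range' c l.length) l
  | [], _, _, _ => Forall₂.nil
  | a :: l, c, hs, hc => by
    rw [List.length_cons, range'_succ]
    refine Forall₂.cons (hc a (.head l)) (range'_le_sorted hs.of_cons ?_)
    intro x hx
    exact (hc a (.head l)).trans_lt (List.rel_of_pairwise_cons hs hx)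

lemma sorted_le_range' : ∀ {l : List ℕ} {m : ℕ}, l.Pairwise (· < ·) → (∀ x ∈ l, x ≤ m) →
    Forall₂ (· ≤ ·) l (range' (m + 1 - l.length) l.length)
  | [], _, _, _ => Forall₂.nil
  | a :: l, m, hs, hm => by
    have hlen : (a :: l).length ≤ m + 1 := by
      have h1 : (a :: l).toFinset ⊆ Finset.range (m + 1) := by
        intro x hx
        simp only [List.mem_toFinset] at hx
        simpa using Nat.lt_succ_of_le (hm x hx)
      have h2 := Finset.card_le_card h1
      rwa [List.toFinset_card_of_nodup hs.nodup, Finset.card_range] at h2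
    have htail := sorted_le_range' hs.of_cons (fun x hx => hm x (.tail _ hx))
    rw [List.length_cons, range'_succ]
    have he : m + 1 - (l.length + 1) + 1 = m + 1 - l.length := by
      simp at hlen; omega
    rw [he]
    refine Forall₂.cons ?_ htail
    rcases htail with _ | ⟨hb, _⟩
    · have := hm a (List.mem_cons_self ..)
      simp at hlen ⊢; omega
    · have := List.rel_of_pairwise_cons hs (List.mem_cons_self ..)
      omega

lemma sort_eq (s : Finset ℕ) (l : List ℕ) (h1 : l.Pairwise (· < ·))
    (h2 : ∀ x, x ∈ l ↔ x ∈ s) : s.sort (· ≤ ·) = l := by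
  refine List.Perm.eq_of_pairwise' (s.pairwise_sort _) (h1.imp le_of_lt)
    (List.perm_of_nodup_nodup_toFinset_eq (s.sort_nodup _) h1.nodup ?_)
  ext x
  simp [h2, Finset.mem_sort]

lemma sort_inj {s s' : Finset ℕ} (h : s.sort (· ≤ ·) = s'.sort (· ≤ ·)) : s = s' := by
  rw [← Finset.sort_toFinset (s := s) (r := (· ≤ ·)), h, Finset.sort_toFinset]

/-! ### The four extremal lists -/

def lT (t r : ℕ) : List ℕ := range' (t - r + 1) r
def lA (t r : ℕ) : List ℕ := (t - r) :: range' (t - r + 2) (r - 1)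
def lB1 (t r : ℕ) : List ℕ := (t - r) :: (t - r + 1) :: range' (t - r + 3) (r - 2)
def lB2 (t r : ℕ) : List ℕ := (t - r - 1) :: range' (t - r + 2) (r - 1)

variable {t r : ℕ} {l : List ℕ}

/-- Every admissible list is dominated by `lT`. -/
lemma le_lT (hr : 2 ≤ r) (ht : r + 2 ≤ t) (hs : l.Pairwise (· < ·)) (hlen : l.length = r)
    (hmem : ∀ x ∈ l, 1 ≤ x ∧ x ≤ t) : Forall₂ (· ≤ ·) l (lT t r) := by
  have h := sorted_le_range' hs (fun x hx => (hmem x hx).2)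
  rw [hlen] at h
  have he : t + 1 - r = t - r + 1 := by omega
  rwa [he] at h

lemma le_lA (hr : 2 ≤ r) (ht : r + 2 ≤ t) (hs : l.Pairwise (· < ·)) (hlen : l.length = r)
    (hmem : ∀ x ∈ l, 1 ≤ x ∧ x ≤ t) (hne : l ≠ lT t r) : Forall₂ (· ≤ ·) l (lA t r) := by
  match l, hs, hlen, hmem, hne with
  | a :: l', hs, hlen, hmem, hne =>
    simp only [List.length_cons] at hlen
    have htail := sorted_le_range' hs.of_cons (fun x hx => (hmem x (.tail _ hx)).2)
    have he : t + 1 - l'.length = t - r + 2 := by omega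
    rw [he] at htail
    have hlen' : l'.length = r - 1 := by omega
    rw [hlen'] at htail
    have ha : a ≤ t - r := by
      by_contra hcon
      push_neg at hcon
      have hge : ∀ x ∈ a :: l', t - r + 1 ≤ x := by
        intro x hx
        rcases List.mem_cons.1 hx with rfl | hx
        · omega
        · have := List.rel_of_pairwise_cons hs hx; omega
      have h1 := range'_le_sorted hs hge
      rw [List.length_cons, hlen] at h1
      exact hne (forall2_antisymm (le_lT hr ht hs (by simp [hlen]) hmem) h1)
    exact Forall₂.cons ha htail

lemma le_lB (hr : 2 ≤ r) (ht : r + 2 ≤ t) (hs : l.Pairwise (· < ·)) (hlen : l.length = r)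
    (hmem : ∀ x ∈ l, 1 ≤ x ∧ x ≤ t) (hneT : l ≠ lT t r) (hneA : l ≠ lA t r) :
    Forall₂ (· ≤ ·) l (lB1 t r) ∨ Forall₂ (· ≤ ·) l (lB2 t r) := by
  have hA := le_lA hr ht hs hlen hmem hneT
  rw [lA] at hA
  rcases hA with - | ⟨ha, htl⟩
  rename_i a tl
  have hr1 : r - 1 = (r - 2) + 1 := by omega
  rw [hr1, range'_succ] at htl
  rcases htl with - | ⟨hb, htl'⟩
  rename_i b l''
  have he3 : t - r + 2 + 1 = t - r + 3 := by omega
  rw [he3] at htl'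
  rcases Nat.lt_or_ge a (t - r) with hlt | hge
  · right
    rw [lB2]
    refine Forall₂.cons (by omega) ?_
    rw [hr1, range'_succ, he3]
    exact Forall₂.cons hb htl'
  · -- a = t - r
    have ha' : a = t - r := le_antisymm ha hge
    have hb1 : b ≤ t - r + 1 := by
      by_contra hcon
      push_neg at hcon
      have hb' : b = t - r + 2 := by omega
      have hge2 : ∀ x ∈ b :: l'', t - r + 2 ≤ x := by
        intro x hx
        rcases List.mem_cons.1 hx with rfl | hx
        · omega
        · have := List.rel_of_pairwise_cons hs.of_cons hx; omega
      have h1 := range'_le_sorted hs.of_cons hge2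
      have hlen'' : (b :: l'').length = r - 1 := by
        simp only [List.length_cons] at hlen ⊢; omega
      rw [hlen''] at h1
      have h2 : Forall₂ (· ≤ ·) (b :: l'') (range' (t - r + 2) (r - 1)) := by
        rw [hr1, range'_succ, he3]
        exact Forall₂.cons hb htl'
      have := forall2_antisymm h2 h1
      exact hneA (by rw [lA, ← this, ha'])
    left
    exact Forall₂.cons ha (Forall₂.cons hb1 htl')

lemma eq_lT_of_ge (hr : 2 ≤ r) (ht : r + 2 ≤ t) (hs : l.Pairwise (· < ·)) (hlen : l.length = r)
    (hmem : ∀ x ∈ l, 1 ≤ x ∧ x ≤ t) (h : Forall₂ (· ≤ ·) (lT t r) l) : l = lT t r :=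
  forall2_antisymm (le_lT hr ht hs hlen hmem) h

lemma eq_of_ge_lA (hr : 2 ≤ r) (ht : r + 2 ≤ t) (hs : l.Pairwise (· < ·)) (hlen : l.length = r)
    (hmem : ∀ x ∈ l, 1 ≤ x ∧ x ≤ t) (h : Forall₂ (· ≤ ·) (lA t r) l) :
    l = lT t r ∨ l = lA t r := by
  by_cases hT : l = lT t r
  · exact Or.inl hT
  · exact Or.inr (forall2_antisymm (le_lA hr ht hs hlen hmem hT) h)

lemma eq_of_ge_lB1 (hr : 2 ≤ r) (ht : r + 2 ≤ t) (hs : l.Pairwise (· < ·)) (hlen : l.length = r)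
    (hmem : ∀ x ∈ l, 1 ≤ x ∧ x ≤ t) (h : Forall₂ (· ≤ ·) (lB1 t r) l) :
    l = lT t r ∨ l = lA t r ∨ l = lB1 t r := by
  by_cases hT : l = lT t r
  · exact Or.inl hT
  by_cases hA : l = lA t r
  · exact Or.inr (Or.inl hA)
  rcases le_lB hr ht hs hlen hmem hT hA with h1 | h2
  · exact Or.inr (Or.inr (forall2_antisymm h1 h))
  · exfalso
    rw [lB1] at h
    rcases h with - | ⟨ha, -⟩
    rw [lB2] at h2
    rcases h2 with - | ⟨ha2, -⟩
    omega

lemma eq_of_ge_lB2 (hr : 2 ≤ r) (ht : r + 2 ≤ t) (hs : l.Pairwise (· < ·)) (hlen : l.length = r)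
    (hmem : ∀ x ∈ l, 1 ≤ x ∧ x ≤ t) (h : Forall₂ (· ≤ ·) (lB2 t r) l) :
    l = lT t r ∨ l = lA t r ∨ l = lB2 t r := by
  by_cases hT : l = lT t r
  · exact Or.inl hT
  by_cases hA : l = lA t r
  · exact Or.inr (Or.inl hA)
  rcases le_lB hr ht hs hlen hmem hT hA with h1 | h2
  · exfalso
    have hr1 : r - 1 = (r - 2) + 1 := by omega
    rw [lB2, hr1, range'_succ] at h
    rcases h with - | ⟨-, h⟩
    rcases h with - | ⟨hb, -⟩
    rw [lB1] at h1
    rcases h1 with - | ⟨-, h1⟩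
    rcases h1 with - | ⟨hb1, -⟩
    omega
  · exact Or.inr (Or.inr (forall2_antisymm h2 h))

/-! ### Sort computations for the extremal finsets -/

lemma sorted_lt_range' (a n : ℕ) : (range' a n).Pairwise (· < ·) := by
  have := List.pairwise_lt_range' (s := a) (n := n)
  simpa using this

lemma sort_T (hr : 2 ≤ r) (ht : r + 2 ≤ t) :
    (Finset.Icc (t - r + 1) t).sort (· ≤ ·) = lT t r := by
  refine sort_eq _ _ (sorted_lt_range' _ _) fun x => ?_
  rw [lT, List.mem_range'_1, Finset.mem_Icc]
  omega

lemma sort_A (hr : 2 ≤ r) (ht : r + 2 ≤ t) :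
    (insert (t - r) (Finset.Icc (t - r + 2) t)).sort (· ≤ ·) = lA t r := by
  refine sort_eq _ _ ?_ fun x => ?_
  · rw [lA]
    refine List.Pairwise.cons ?_ (sorted_lt_range' _ _)
    intro x hx
    rw [List.mem_range'_1] at hx
    omega
  · rw [lA, List.mem_cons, List.mem_range'_1, Finset.mem_insert, Finset.mem_Icc]
    omega

lemma sort_B1 (hr : 2 ≤ r) (ht : r + 2 ≤ t) :
    (insert (t - r) (insert (t - r + 1) (Finset.Icc (t - r + 3) t))).sort (· ≤ ·) = lB1 t r := by
  refine sort_eq _ _ ?_ fun x => ?_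
  · rw [lB1]
    refine List.Pairwise.cons ?_ (List.Pairwise.cons ?_ (sorted_lt_range' _ _)) <;>
    · intro x hx
      simp only [List.mem_cons, List.mem_range'_1] at hx
      omega
  · rw [lB1]
    simp only [List.mem_cons, List.mem_range'_1, Finset.mem_insert, Finset.mem_Icc]
    omega

lemma sort_B2 (hr : 2 ≤ r) (ht : r + 2 ≤ t) :
    (insert (t - r - 1) (Finset.Icc (t - r + 2) t)).sort (· ≤ ·) = lB2 t r := by
  refine sort_eq _ _ ?_ fun x => ?_
  · rw [lB2]
    refine List.Pairwise.cons ?_ (sorted_lt_range' _ _)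
    intro x hx
    rw [List.mem_range'_1] at hx
    omega
  · rw [lB2, List.mem_cons, List.mem_range'_1, Finset.mem_insert, Finset.mem_Icc]
    omega

lemma length_lT : (lT t r).length = r := by simp [lT]
lemma length_lA (hr : 2 ≤ r) : (lA t r).length = r := by simp [lA]; omega
lemma length_lB1 (hr : 2 ≤ r) : (lB1 t r).length = r := by simp [lB1]; omega
lemma length_lB2 (hr : 2 ≤ r) : (lB2 t r).length = r := by simp [lB2]; omega

lemma lT_ne_lA (hr : 2 ≤ r) (ht : r + 2 ≤ t) : lT t r ≠ lA t r := by
  intro h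
  have hr1 : r = (r - 1) + 1 := by omega
  rw [lT, hr1, range'_succ, lA] at h
  simp only [List.cons.injEq] at h
  omega

lemma lT_ne_lB1 (hr : 2 ≤ r) (ht : r + 2 ≤ t) : lT t r ≠ lB1 t r := by
  intro h
  have hr1 : r = (r - 1) + 1 := by omega
  rw [lT, hr1, range'_succ, lB1] at h
  simp only [List.cons.injEq] at h
  omega

lemma lT_ne_lB2 (hr : 2 ≤ r) (ht : r + 2 ≤ t) : lT t r ≠ lB2 t r := by
  intro h
  have hr1 : r = (r - 1) + 1 := by omega
  rw [lT, hr1, range'_succ, lB2] at h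
  simp only [List.cons.injEq] at h
  omega

lemma lA_ne_lB1 (hr : 2 ≤ r) (ht : r + 2 ≤ t) : lA t r ≠ lB1 t r := by
  intro h
  have hr1 : r - 1 = (r - 2) + 1 := by omega
  rw [lA, hr1, range'_succ, lB1] at h
  simp only [List.cons.injEq] at h
  omega

lemma lA_ne_lB2 (hr : 2 ≤ r) (ht : r + 2 ≤ t) : lA t r ≠ lB2 t r := by
  intro h
  rw [lA, lB2] at h
  simp only [List.cons.injEq] at h
  omega

end LCAux

open List LCAux in
/-- There are exactly two left-compressed `r`-graphs on `[t]` with `C(t,r) − 3` edges. -/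
theorem left_compressed_choose_sub_three {t r : ℕ} (hr : 2 ≤ r) (ht : r + 2 ≤ t) :
    ∀ E : Finset (Finset ℕ),
      (E ⊆ (Finset.Icc 1 t).powersetCard r ∧ E.card = t.choose r - 3 ∧
        LeftCompressedOn (Finset.Icc 1 t) E) ↔
      (E = (Finset.Icc 1 t).powersetCard r \
            {Finset.Icc (t - r + 1) t,
             insert (t - r) (Finset.Icc (t - r + 2) t),
             insert (t - r) (insert (t - r + 1) (Finset.Icc (t - r + 3) t))} ∨
       E = (Finset.Icc 1 t).powersetCard r \
            {Finset.Icc (t - r + 1) t,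
             insert (t - r) (Finset.Icc (t - r + 2) t),
             insert (t - r - 1) (Finset.Icc (t - r + 2) t)}) := by
  intro E
  set V := Finset.Icc 1 t with hV
  set P := V.powersetCard r with hP
  set T := Finset.Icc (t - r + 1) t with hT
  set A := insert (t - r) (Finset.Icc (t - r + 2) t) with hA
  set B1 := insert (t - r) (insert (t - r + 1) (Finset.Icc (t - r + 3) t)) with hB1
  set B2 := insert (t - r - 1) (Finset.Icc (t - r + 2) t) with hB2
  have hTs : T.sort (· ≤ ·) = lT t r := sort_T hr ht
  have hAs : A.sort (· ≤ ·) = lA t r := sort_A hr ht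
  have hB1s : B1.sort (· ≤ ·) = lB1 t r := sort_B1 hr ht
  have hB2s : B2.sort (· ≤ ·) = lB2 t r := sort_B2 hr ht
  -- basic properties of members of P
  have hprop : ∀ s ∈ P, (Finset.sort s (· ≤ ·)).length = r ∧
      ∀ x ∈ Finset.sort s (· ≤ ·), 1 ≤ x ∧ x ≤ t := by
    intro s hs
    rw [hP, Finset.mem_powersetCard] at hs
    refine ⟨by rw [Finset.length_sort, hs.2], fun x hx => ?_⟩
    have := hs.1 ((Finset.mem_sort _).1 hx)
    rwa [hV, Finset.mem_Icc] at this
  -- memberships in P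
  have cardOf : ∀ s : Finset ℕ, ∀ l : List ℕ, Finset.sort s (· ≤ ·) = l → s.card = l.length := by
    intro s l h
    rw [← Finset.length_sort (r := (· ≤ ·)), h]
  have hTP : T ∈ P := by
    rw [hP, Finset.mem_powersetCard]
    refine ⟨fun x hx => ?_, by rw [cardOf T _ hTs, length_lT]⟩
    rw [hT, Finset.mem_Icc] at hx
    rw [hV, Finset.mem_Icc]
    omega
  have hAP : A ∈ P := by
    rw [hP, Finset.mem_powersetCard]
    refine ⟨fun x hx => ?_, by rw [cardOf A _ hAs, length_lA hr]⟩
    rw [hA, Finset.mem_insert, Finset.mem_Icc] at hx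
    rw [hV, Finset.mem_Icc]
    omega
  have hB1P : B1 ∈ P := by
    rw [hP, Finset.mem_powersetCard]
    refine ⟨fun x hx => ?_, by rw [cardOf B1 _ hB1s, length_lB1 hr]⟩
    rw [hB1, Finset.mem_insert, Finset.mem_insert, Finset.mem_Icc] at hx
    rw [hV, Finset.mem_Icc]
    omega
  have hB2P : B2 ∈ P := by
    rw [hP, Finset.mem_powersetCard]
    refine ⟨fun x hx => ?_, by rw [cardOf B2 _ hB2s, length_lB2 hr]⟩
    rw [hB2, Finset.mem_insert, Finset.mem_Icc] at hx
    rw [hV, Finset.mem_Icc]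
    omega
  -- distinctness
  have sort_ne : ∀ {s s' : Finset ℕ} {l l' : List ℕ}, Finset.sort s (· ≤ ·) = l →
      Finset.sort s' (· ≤ ·) = l' → l ≠ l' → s ≠ s' := by
    intro s s' l l' h h' hne heq
    exact hne (h ▸ h' ▸ congrArg (Finset.sort · (· ≤ ·)) heq)
  have hTA : T ≠ A := sort_ne hTs hAs (lT_ne_lA hr ht)
  have hTB1 : T ≠ B1 := sort_ne hTs hB1s (lT_ne_lB1 hr ht)
  have hTB2 : T ≠ B2 := sort_ne hTs hB2s (lT_ne_lB2 hr ht)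
  have hAB1 : A ≠ B1 := sort_ne hAs hB1s (lA_ne_lB1 hr ht)
  have hAB2 : A ≠ B2 := sort_ne hAs hB2s (lA_ne_lB2 hr ht)
  -- upper characterizations
  have chT : ∀ g ∈ P, Forall₂ (· ≤ ·) (T.sort (· ≤ ·)) (g.sort (· ≤ ·)) → g = T := by
    intro g hg h
    rw [hTs] at h
    have := eq_lT_of_ge hr ht (Finset.sortedLT_sort g).pairwise (hprop g hg).1 (hprop g hg).2 h
    exact sort_inj (this.trans hTs.symm)
  have chA : ∀ g ∈ P, Forall₂ (· ≤ ·) (A.sort (· ≤ ·)) (g.sort (· ≤ ·)) → g = T ∨ g = A := by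
    intro g hg h
    rw [hAs] at h
    rcases eq_of_ge_lA hr ht (Finset.sortedLT_sort g).pairwise (hprop g hg).1 (hprop g hg).2 h with h' | h'
    · exact Or.inl (sort_inj (h'.trans hTs.symm))
    · exact Or.inr (sort_inj (h'.trans hAs.symm))
  have chB1 : ∀ g ∈ P, Forall₂ (· ≤ ·) (B1.sort (· ≤ ·)) (g.sort (· ≤ ·)) →
      g = T ∨ g = A ∨ g = B1 := by
    intro g hg h
    rw [hB1s] at h
    rcases eq_of_ge_lB1 hr ht (Finset.sortedLT_sort g).pairwise (hprop g hg).1 (hprop g hg).2 h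
      with h' | h' | h'
    · exact Or.inl (sort_inj (h'.trans hTs.symm))
    · exact Or.inr (Or.inl (sort_inj (h'.trans hAs.symm)))
    · exact Or.inr (Or.inr (sort_inj (h'.trans hB1s.symm)))
  have chB2 : ∀ g ∈ P, Forall₂ (· ≤ ·) (B2.sort (· ≤ ·)) (g.sort (· ≤ ·)) →
      g = T ∨ g = A ∨ g = B2 := by
    intro g hg h
    rw [hB2s] at h
    rcases eq_of_ge_lB2 hr ht (Finset.sortedLT_sort g).pairwise (hprop g hg).1 (hprop g hg).2 h
      with h' | h' | h'
    · exact Or.inl (sort_inj (h'.trans hTs.symm))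
    · exact Or.inr (Or.inl (sort_inj (h'.trans hAs.symm)))
    · exact Or.inr (Or.inr (sort_inj (h'.trans hB2s.symm)))
  have hPcard : P.card = t.choose r := by
    rw [hP, Finset.card_powersetCard, hV, Nat.card_Icc]
    norm_num
  have hchoose3 : 3 ≤ t.choose r := by
    calc 3 ≤ Nat.choose 4 2 := by decide
    _ ≤ Nat.choose (r + 2) 2 := Nat.choose_le_choose 2 (by omega)
    _ = Nat.choose (r + 2) r := by
        rw [← Nat.choose_symm (show 2 ≤ r + 2 by omega), Nat.add_sub_cancel]
    _ ≤ Nat.choose t r := Nat.choose_le_choose r ht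
  -- the backward construction
  have back : ∀ B : Finset ℕ, B ∈ P → T ≠ B → A ≠ B →
      (∀ g ∈ P, Forall₂ (· ≤ ·) (B.sort (· ≤ ·)) (g.sort (· ≤ ·)) → g = T ∨ g = A ∨ g = B) →
      (P \ {T, A, B} ⊆ P ∧ (P \ {T, A, B}).card = t.choose r - 3 ∧
        LeftCompressedOn V (P \ {T, A, B})) := by
    intro B hBP hTB hAB chB
    have hsub : {T, A, B} ⊆ P := by
      intro x hx
      simp only [Finset.mem_insert, Finset.mem_singleton] at hx
      rcases hx with rfl | rfl | rfl <;> assumption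
    have hc3 : ({T, A, B} : Finset (Finset ℕ)).card = 3 := by
      rw [Finset.card_insert_of_notMem (by simp [hTA, hTB]),
        Finset.card_insert_of_notMem (by simp [hAB]), Finset.card_singleton]
    refine ⟨Finset.sdiff_subset, ?_, ?_⟩
    · rw [Finset.card_sdiff_of_subset hsub, hPcard, hc3]
    · intro e he f hfV hfe
      rcases Finset.mem_sdiff.1 he with ⟨heP, heN⟩
      simp only [Finset.mem_insert, Finset.mem_singleton] at heN
      push_neg at heN
      have hfP : f ∈ P := by
        rw [hP, Finset.mem_powersetCard]
        refine ⟨hfV, ?_⟩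
        rw [← Finset.length_sort (r := (· ≤ ·)), hfe.length_eq, Finset.length_sort, 
          (Finset.mem_powersetCard.1 heP).2]
      rw [Finset.mem_sdiff]
      refine ⟨hfP, ?_⟩
      simp only [Finset.mem_insert, Finset.mem_singleton]
      push_neg
      refine ⟨fun hfT => ?_, fun hfA => ?_, fun hfB => ?_⟩
      · exact heN.1 (chT e heP (hfT ▸ hfe))
      · rcases chA e heP (hfA ▸ hfe) with h | h
        · exact heN.1 h
        · exact heN.2.1 h
      · rcases chB e heP (hfB ▸ hfe) with h | h | h
        · exact heN.1 h
        · exact heN.2.1 h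
        · exact heN.2.2 h
  constructor
  · rintro ⟨hEP, hcard, hLC⟩
    set F := P \ E with hF
    have hFcard : F.card = 3 := by
      rw [hF, Finset.card_sdiff_of_subset hEP, hPcard, hcard]
      omega
    have upcl : ∀ f ∈ F, ∀ g ∈ P, Forall₂ (· ≤ ·) (f.sort (· ≤ ·)) (g.sort (· ≤ ·)) → g ∈ F := by
      intro f hf g hg hfg
      rcases Finset.mem_sdiff.1 hf with ⟨hfP, hfE⟩
      rw [hF, Finset.mem_sdiff]
      refine ⟨hg, fun hgE => hfE (hLC g hgE f ?_ hfg)⟩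
      exact (Finset.mem_powersetCard.1 hfP).1
    obtain ⟨f0, hf0⟩ : F.Nonempty := Finset.card_pos.1 (by omega)
    have hf0P : f0 ∈ P := (Finset.mem_sdiff.1 hf0).1
    have hTF : T ∈ F := by
      refine upcl f0 hf0 T hTP ?_
      rw [hTs]
      exact le_lT hr ht (Finset.sortedLT_sort f0).pairwise (hprop f0 hf0P).1 (hprop f0 hf0P).2
    have hFT2 : (F.erase T).card = 2 := by
      rw [Finset.card_erase_of_mem hTF, hFcard]
    obtain ⟨g0, hg0⟩ : (F.erase T).Nonempty := Finset.card_pos.1 (by omega)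
    rcases Finset.mem_erase.1 hg0 with ⟨hg0T, hg0F⟩
    have hg0P : g0 ∈ P := (Finset.mem_sdiff.1 hg0F).1
    have hAF : A ∈ F := by
      refine upcl g0 hg0F A hAP ?_
      rw [hAs]
      refine le_lA hr ht (Finset.sortedLT_sort g0).pairwise (hprop g0 hg0P).1 (hprop g0 hg0P).2 ?_
      exact fun h => hg0T (sort_inj (h.trans hTs.symm))
    have hAeT : A ∈ F.erase T := Finset.mem_erase.2 ⟨fun h => hTA h.symm, hAF⟩
    have hFTA1 : ((F.erase T).erase A).card = 1 := by
      rw [Finset.card_erase_of_mem hAeT, hFT2]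
    obtain ⟨c, hc⟩ : ((F.erase T).erase A).Nonempty := Finset.card_pos.1 (by omega)
    rcases Finset.mem_erase.1 hc with ⟨hcA, hc'⟩
    rcases Finset.mem_erase.1 hc' with ⟨hcT, hcF⟩
    have hcP : c ∈ P := (Finset.mem_sdiff.1 hcF).1
    have hcle := le_lB hr ht (Finset.sortedLT_sort c).pairwise (hprop c hcP).1 (hprop c hcP).2
      (fun h => hcT (sort_inj (h.trans hTs.symm)))
      (fun h => hcA (sort_inj (h.trans hAs.symm)))
    have finish : ∀ B : Finset ℕ, B ∈ F → T ≠ B → A ≠ B → E = P \ {T, A, B} := by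
      intro B hBF hTB hAB
      have hsub : {T, A, B} ⊆ F := by
        intro x hx
        simp only [Finset.mem_insert, Finset.mem_singleton] at hx
        rcases hx with rfl | rfl | rfl <;> assumption
      have hc3 : ({T, A, B} : Finset (Finset ℕ)).card = 3 := by
        rw [Finset.card_insert_of_notMem (by simp [hTA, hTB]),
          Finset.card_insert_of_notMem (by simp [hAB]), Finset.card_singleton]
      have hFeq : {T, A, B} = F := Finset.eq_of_subset_of_card_le hsub (by omega)
      rw [hFeq, hF]
      exact (Finset.sdiff_sdiff_eq_self hEP).symm
    rcases hcle with h1 | h2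
    · left
      have hB1F : B1 ∈ F := upcl c hcF B1 hB1P (by rw [hB1s]; exact h1)
      exact finish B1 hB1F hTB1 hAB1
    · right
      have hB2F : B2 ∈ F := upcl c hcF B2 hB2P (by rw [hB2s]; exact h2)
      exact finish B2 hB2F hTB2 hAB2
  · rintro (rfl | rfl)
    · exact back B1 hB1P hTB1 hAB1 chB1
    · exact back B2 hB2P hTB2 hAB2 chB2
end

section
/- Let t ≥ r+2 and let G3 = [t]^(r) minus the four r-sets (t−r+1)···t, (t−r)(t−r+2)···t, (t−r)(t−r+1)(t−r+3)···t, (t−r)(t−r+1)(t−r+2)(t−r+4)···t. Let x' be an optimal weighting for G3 with x'_1 ≥ ··· ≥ x'_t > 0; write a' = x'_1 (common value of x'_1,...,x'_{t−r−1}) and b' = x'_{t−r} (common value of x'_{t−r},...,x'_{t−r+3}). Then a' ≤ 2b'. -/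
open Finset

set_option maxHeartbeats 2000000

lemma lag_le (E : Finset (Finset ℕ)) (z : ℕ → ℝ) (hz : IsLegalN z) :
    lagEvalN E z ≤ lagrangianN E := by
  have hb : BddAbove {v | ∃ x, IsLegalN x ∧ lagEvalN E x = v} := by
    refine ⟨(E.card : ℝ), ?_⟩
    rintro v ⟨y, ⟨hy0, s, hs0, hs1⟩, rfl⟩
    have h1 : ∀ i, y i ≤ 1 := by
      intro i
      by_cases hi : i ∈ s
      · calc y i ≤ ∑ j ∈ s, y j := Finset.single_le_sum (fun j _ => hy0 j) hi
          _ = 1 := hs1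
      · rw [hs0 i hi]; norm_num
    calc lagEvalN E y ≤ ∑ _e ∈ E, (1:ℝ) :=
          Finset.sum_le_sum fun e _ =>
            Finset.prod_le_one (fun i _ => hy0 i) (fun i _ => h1 i)
      _ = E.card := by simp
  exact le_csSup hb ⟨z, hz, rfl⟩

lemma lag_decomp (E : Finset (Finset ℕ)) (x : ℕ → ℝ) (i j : ℕ) (hij : i ≠ j) (a b : ℝ) :
    lagEvalN E (fun v => if v = i then a else if v = j then b else x v) =
      (∑ e ∈ E.filter (fun e => i ∉ e ∧ j ∉ e), ∏ v ∈ e, x v)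
      + a * ∑ e ∈ E.filter (fun e => i ∈ e ∧ j ∉ e), ∏ v ∈ e.erase i, x v
      + b * ∑ e ∈ E.filter (fun e => j ∈ e ∧ i ∉ e), ∏ v ∈ e.erase j, x v
      + a * b * ∑ e ∈ E.filter (fun e => i ∈ e ∧ j ∈ e), ∏ v ∈ (e.erase i).erase j, x v := by
  classical
  set y : ℕ → ℝ := fun v => if v = i then a else if v = j then b else x v with hy
  have hyx : ∀ v, v ≠ i → v ≠ j → y v = x v := by
    intro v h1 h2; simp [hy, h1, h2]
  have key : ∀ e : Finset ℕ,
      ∏ v ∈ e, y v =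
        if i ∈ e then (if j ∈ e then a * b * ∏ v ∈ (e.erase i).erase j, x v
                       else a * ∏ v ∈ e.erase i, x v)
        else (if j ∈ e then b * ∏ v ∈ e.erase j, x v else ∏ v ∈ e, x v) := by
    intro e
    by_cases hi : i ∈ e <;> by_cases hj : j ∈ e <;> simp only [hi, hj, if_true, if_false]
    · rw [← Finset.mul_prod_erase e y hi,
        ← Finset.mul_prod_erase (e.erase i) y (Finset.mem_erase.2 ⟨hij.symm, hj⟩)]
      have : ∀ v ∈ (e.erase i).erase j, y v = x v := by
        intro v hv
        simp only [Finset.mem_erase] at hv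
        exact hyx v hv.2.1 hv.1
      rw [Finset.prod_congr rfl this]
      simp [hy, hij.symm, mul_assoc]
    · rw [← Finset.mul_prod_erase e y hi]
      have : ∀ v ∈ e.erase i, y v = x v := by
        intro v hv
        simp only [Finset.mem_erase] at hv
        exact hyx v hv.1 (fun h => hj (h ▸ hv.2))
      rw [Finset.prod_congr rfl this]
      simp [hy]
    · rw [← Finset.mul_prod_erase e y hj]
      have : ∀ v ∈ e.erase j, y v = x v := by
        intro v hv
        simp only [Finset.mem_erase] at hv
        exact hyx v (fun h => hi (h ▸ hv.2)) hv.1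
      rw [Finset.prod_congr rfl this]
      simp [hy, hij.symm]
    · exact Finset.prod_congr rfl fun v hv =>
        hyx v (fun h => hi (h ▸ hv)) (fun h => hj (h ▸ hv))
  rw [lagEvalN]
  rw [← Finset.sum_filter_add_sum_filter_not E (fun e => i ∈ e)]
  rw [← Finset.sum_filter_add_sum_filter_not (E.filter (fun e => i ∈ e)) (fun e => j ∈ e)]
  rw [← Finset.sum_filter_add_sum_filter_not (E.filter (fun e => ¬ i ∈ e)) (fun e => j ∈ e)]
  rw [Finset.filter_filter, Finset.filter_filter, Finset.filter_filter, Finset.filter_filter]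
  have c1 : ∑ e ∈ E.filter (fun e => i ∈ e ∧ j ∈ e), ∏ v ∈ e, y v
      = a * b * ∑ e ∈ E.filter (fun e => i ∈ e ∧ j ∈ e), ∏ v ∈ (e.erase i).erase j, x v := by
    rw [Finset.mul_sum]
    refine Finset.sum_congr rfl fun e he => ?_
    simp only [Finset.mem_filter] at he
    rw [key e]; simp [he.2.1, he.2.2]
  have c2 : ∑ e ∈ E.filter (fun e => i ∈ e ∧ ¬ j ∈ e), ∏ v ∈ e, y v
      = a * ∑ e ∈ E.filter (fun e => i ∈ e ∧ j ∉ e), ∏ v ∈ e.erase i, x v := by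
    rw [Finset.mul_sum]
    refine Finset.sum_congr rfl fun e he => ?_
    simp only [Finset.mem_filter] at he
    rw [key e]; simp [he.2.1, he.2.2]
  have hfe : E.filter (fun e => ¬ i ∈ e ∧ j ∈ e) = E.filter (fun e => j ∈ e ∧ i ∉ e) := by
    ext e; simp only [Finset.mem_filter]; tauto
  have c3 : ∑ e ∈ E.filter (fun e => ¬ i ∈ e ∧ j ∈ e), ∏ v ∈ e, y v
      = b * ∑ e ∈ E.filter (fun e => j ∈ e ∧ i ∉ e), ∏ v ∈ e.erase j, x v := by
    rw [hfe, Finset.mul_sum]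
    refine Finset.sum_congr rfl fun e he => ?_
    simp only [Finset.mem_filter] at he
    rw [key e]; simp [he.2.1, he.2.2]
  have c4 : ∑ e ∈ E.filter (fun e => ¬ i ∈ e ∧ ¬ j ∈ e), ∏ v ∈ e, y v
      = ∑ e ∈ E.filter (fun e => i ∉ e ∧ j ∉ e), ∏ v ∈ e, x v := by
    refine Finset.sum_congr rfl fun e he => ?_
    simp only [Finset.mem_filter] at he
    rw [key e]; simp [he.2.1, he.2.2]
  rw [c1, c2, c3, c4]; ring

lemma swap_bij (t n r : ℕ) (h1 : 1 ≤ n) (h2 : n ≤ t) (hne : (1:ℕ) ≠ n) (x : ℕ → ℝ) :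
    ∑ e ∈ ((Icc 1 t).powersetCard r).filter (fun e => 1 ∈ e ∧ n ∉ e), ∏ v ∈ e.erase 1, x v
    = ∑ e ∈ ((Icc 1 t).powersetCard r).filter (fun e => n ∈ e ∧ 1 ∉ e), ∏ v ∈ e.erase n, x v := by
  classical
  refine Finset.sum_nbij' (fun e => insert n (e.erase 1)) (fun e => insert 1 (e.erase n))
    ?_ ?_ ?_ ?_ ?_
  · intro e he
    simp only [mem_filter, mem_powersetCard] at he ⊢
    obtain ⟨⟨hsub, hcard⟩, h1e, hne'⟩ := he
    have hnmem : n ∉ e.erase 1 := fun h => hne' (mem_of_mem_erase h)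
    have hrpos : 0 < r := hcard ▸ card_pos.2 ⟨1, h1e⟩
    refine ⟨⟨?_, ?_⟩, mem_insert_self _ _, ?_⟩
    · intro v hv
      rcases mem_insert.1 hv with rfl | hv
      · exact mem_Icc.2 ⟨h1, h2⟩
      · exact hsub (mem_of_mem_erase hv)
    · rw [card_insert_of_notMem hnmem, card_erase_of_mem h1e, hcard]; omega
    · intro h
      rcases mem_insert.1 h with h | h
      · exact hne h
      · exact (mem_erase.1 h).1 rfl
  · intro e he
    simp only [mem_filter, mem_powersetCard] at he ⊢
    obtain ⟨⟨hsub, hcard⟩, hne', h1e⟩ := he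
    have h1mem : 1 ∉ e.erase n := fun h => h1e (mem_of_mem_erase h)
    have hrpos : 0 < r := hcard ▸ card_pos.2 ⟨n, hne'⟩
    refine ⟨⟨?_, ?_⟩, mem_insert_self _ _, ?_⟩
    · intro v hv
      rcases mem_insert.1 hv with rfl | hv
      · exact mem_Icc.2 ⟨le_refl 1, le_trans h1 h2⟩
      · exact hsub (mem_of_mem_erase hv)
    · rw [card_insert_of_notMem h1mem, card_erase_of_mem hne', hcard]; omega
    · intro h
      rcases mem_insert.1 h with h | h
      · exact hne h.symm
      · exact (mem_erase.1 h).1 rfl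
  · intro e he
    simp only [mem_filter, mem_powersetCard] at he
    obtain ⟨_, h1e, hne'⟩ := he
    have hnmem : n ∉ e.erase 1 := fun h => hne' (mem_of_mem_erase h)
    rw [erase_insert hnmem, insert_erase h1e]
  · intro e he
    simp only [mem_filter, mem_powersetCard] at he
    obtain ⟨_, hne', h1e⟩ := he
    have h1mem : 1 ∉ e.erase n := fun h => h1e (mem_of_mem_erase h)
    rw [erase_insert h1mem, insert_erase hne']
  · intro e he
    simp only [mem_filter, mem_powersetCard] at he
    obtain ⟨_, h1e, hne'⟩ := he
    have hnmem : n ∉ e.erase 1 := fun h => hne' (mem_of_mem_erase h)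
    rw [erase_insert hnmem]

/-- For `G3 = [t]^(r)` minus the four indicated `r`-sets, any fully supported,
nonincreasing optimal weighting `x'` satisfies `a' ≤ 2b'`, i.e. `x'_1 ≤ 2·x'_{t−r}`. -/
theorem G3_first_weight_le_two_mul {t r : ℕ} (hr : 3 ≤ r) (ht : r + 2 ≤ t)
    (x : ℕ → ℝ) (hx : IsLegalN x) (hsupp : ∀ i, x i ≠ 0 → i ∈ Finset.Icc 1 t)
    (hpos : ∀ i ∈ Finset.Icc 1 t, 0 < x i)
    (hanti : ∀ i j, 1 ≤ i → i ≤ j → j ≤ t → x j ≤ x i)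
    (hopt : lagEvalN ((Finset.Icc 1 t).powersetCard r \
        {Finset.Icc (t - r + 1) t,
         insert (t - r) (Finset.Icc (t - r + 2) t),
         insert (t - r) (insert (t - r + 1) (Finset.Icc (t - r + 3) t)),
         insert (t - r) (insert (t - r + 1) (insert (t - r + 2) (Finset.Icc (t - r + 4) t)))}) x
      = lagrangianN ((Finset.Icc 1 t).powersetCard r \
        {Finset.Icc (t - r + 1) t,
         insert (t - r) (Finset.Icc (t - r + 2) t),
         insert (t - r) (insert (t - r + 1) (Finset.Icc (t - r + 3) t)),
         insert (t - r) (insert (t - r + 1) (insert (t - r + 2) (Finset.Icc (t - r + 4) t)))})) :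
    x 1 ≤ 2 * x (t - r) := by
  classical
  obtain ⟨hx0, s, hs0, hs1⟩ := hx
  set n := t - r with hn
  have hn2 : 2 ≤ n := by omega
  have htn : t = n + r := by omega
  set A := (Icc 1 t).powersetCard r with hA
  set F1 := Icc (n+1) t with hF1
  set F2 := insert n (Icc (n+2) t) with hF2
  set F3 := insert n (insert (n+1) (Icc (n+3) t)) with hF3
  set F4 := insert n (insert (n+1) (insert (n+2) (Icc (n+4) t))) with hF4
  set E := A \ {F1, F2, F3, F4} with hE
  set N1 := ∑ e ∈ E.filter (fun e => 1 ∈ e ∧ n ∉ e), ∏ v ∈ e.erase 1, x v with hN1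
  set Nn := ∑ e ∈ E.filter (fun e => n ∈ e ∧ 1 ∉ e), ∏ v ∈ e.erase n, x v with hNn
  set Q := ∑ e ∈ E.filter (fun e => 1 ∈ e ∧ n ∈ e), ∏ v ∈ (e.erase 1).erase n, x v with hQ
  set C := ∑ e ∈ E.filter (fun e => 1 ∉ e ∧ n ∉ e), ∏ v ∈ e, x v with hC
  have h1n : (1:ℕ) ≠ n := by omega
  have h1t : (1:ℕ) ∈ Icc 1 t := by simp [mem_Icc]; omega
  have hnt : n ∈ Icc 1 t := by simp [mem_Icc]; omega
  have hxdecomp : lagEvalN E x = C + x 1 * N1 + x n * Nn + x 1 * x n * Q := by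
    have h := lag_decomp E x 1 n h1n (x 1) (x n)
    have hfun : (fun v => if v = 1 then x 1 else if v = n then x n else x v) = x := by
      funext v; split_ifs with hv1 hv2
      · rw [hv1]
      · rw [hv2]
      · rfl
    rw [hfun] at h
    exact h
  have hzero : ∀ i ∉ Icc 1 t, x i = 0 := by
    intro i hi; by_contra h; exact hi (hsupp i h)
  have hsumIcc : ∑ i ∈ Icc 1 t, x i = 1 := by
    have e1 : ∑ i ∈ Icc 1 t, x i = ∑ i ∈ s ∪ Icc 1 t, x i := by
      refine Finset.sum_subset Finset.subset_union_right ?_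
      intro i hi hni; exact hzero i hni
    have e2 : ∑ i ∈ s, x i = ∑ i ∈ s ∪ Icc 1 t, x i := by
      refine Finset.sum_subset Finset.subset_union_left ?_
      intro i hi hni; exact hs0 i hni
    rw [e1, ← e2, hs1]
  -- the key perturbation inequality
  have hkey : ∀ ε : ℝ, 0 < ε → ε ≤ x 1 → (x 1 - x n) * Q ≤ N1 - Nn + ε * Q := by
    intro ε hε hεa
    set y : ℕ → ℝ := fun v => if v = 1 then x 1 - ε else if v = n then x n + ε else x v with hy
    have hyx : ∀ v, v ≠ 1 → v ≠ n → y v = x v := by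
      intro v hv1 hv2; simp [hy, hv1, hv2]
    have hydecomp : lagEvalN E y
        = C + (x 1 - ε) * N1 + (x n + ε) * Nn + (x 1 - ε) * (x n + ε) * Q :=
      lag_decomp E x 1 n h1n (x 1 - ε) (x n + ε)
    have hyleg : IsLegalN y := by
      refine ⟨?_, Icc 1 t, ?_, ?_⟩
      · intro i
        by_cases hi1 : i = 1
        · simp [hy, hi1]; linarith
        · by_cases hin : i = n
          · simp [hy, hin, h1n.symm]
            have := hx0 n; linarith
          · rw [hyx i hi1 hin]; exact hx0 i
      · intro i hi
        have hne1 : i ≠ 1 := fun h => hi (h ▸ h1t)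
        have hnen : i ≠ n := fun h => hi (h ▸ hnt)
        rw [hyx i hne1 hnen]; exact hzero i hi
      · have hsplit : ∑ i ∈ Icc 1 t, y i = ∑ i ∈ Icc 1 t, x i + ∑ i ∈ Icc 1 t, (y i - x i) := by
          rw [← Finset.sum_add_distrib]; congr 1; funext i; ring
        have hsub : ∑ i ∈ Icc 1 t, (y i - x i) = ∑ i ∈ ({1, n} : Finset ℕ), (y i - x i) := by
          refine (Finset.sum_subset ?_ ?_).symm
          · intro i hi
            rcases Finset.mem_insert.1 hi with rfl | hi
            · exact h1t
            · rw [Finset.mem_singleton] at hi; exact hi ▸ hnt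
          · intro i _ hi
            have hne1 : i ≠ 1 := fun h => hi (by simp [h])
            have hnen : i ≠ n := fun h => hi (by simp [h])
            rw [hyx i hne1 hnen]; ring
        rw [hsplit, hsub, hsumIcc, Finset.sum_pair h1n]
        have hy1 : y 1 = x 1 - ε := by simp [hy]
        have hyn : y n = x n + ε := by simp [hy, h1n.symm]
        rw [hy1, hyn]; ring
    have hle : lagEvalN E y ≤ lagEvalN E x := by
      rw [hopt]; exact lag_le E y hyleg
    rw [hydecomp, hxdecomp] at hle
    nlinarith [hle, hε]

  -- basic membership facts about the removed sets
  have h1F1 : (1:ℕ) ∉ F1 := by simp only [hF1, mem_insert, mem_Icc]; omega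
  have h1F2 : (1:ℕ) ∉ F2 := by simp only [hF2, mem_insert, mem_Icc]; omega
  have h1F3 : (1:ℕ) ∉ F3 := by simp only [hF3, mem_insert, mem_Icc]; omega
  have h1F4 : (1:ℕ) ∉ F4 := by simp only [hF4, mem_insert, mem_Icc]; omega
  have hnF1 : n ∉ F1 := by simp only [hF1, mem_insert, mem_Icc]; omega
  have hnF2 : n ∈ F2 := by simp [hF2]
  have hnF3 : n ∈ F3 := by simp [hF3]
  have hnF4 : n ∈ F4 := by simp [hF4]
  have hfilter1 : E.filter (fun e => 1 ∈ e ∧ n ∉ e) = A.filter (fun e => 1 ∈ e ∧ n ∉ e) := by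
    ext e
    simp only [hE, Finset.mem_filter, Finset.mem_sdiff, Finset.mem_insert, Finset.mem_singleton]
    constructor
    · rintro ⟨⟨hAe, _⟩, hp⟩; exact ⟨hAe, hp⟩
    · rintro ⟨hAe, hp⟩
      refine ⟨⟨hAe, ?_⟩, hp⟩
      rintro (rfl | rfl | rfl | rfl)
      · exact h1F1 hp.1
      · exact h1F2 hp.1
      · exact h1F3 hp.1
      · exact h1F4 hp.1
  have hfiltern : E.filter (fun e => n ∈ e ∧ 1 ∉ e)
      = (A.filter (fun e => n ∈ e ∧ 1 ∉ e)) \ {F2, F3, F4} := by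
    ext e
    simp only [hE, Finset.mem_filter, Finset.mem_sdiff, Finset.mem_insert, Finset.mem_singleton]
    constructor
    · rintro ⟨⟨hAe, hne⟩, hp⟩
      exact ⟨⟨hAe, hp⟩, fun h => hne (Or.inr h)⟩
    · rintro ⟨⟨hAe, hp⟩, hne⟩
      refine ⟨⟨hAe, ?_⟩, hp⟩
      rintro (rfl | h)
      · exact hnF1 hp.1
      · exact hne h
  have hF2card : F2.card = r := by
    rw [hF2, card_insert_of_notMem (by simp only [mem_insert, mem_Icc, mem_singleton]; omega), Nat.card_Icc]; omega
  have hF3card : F3.card = r := by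
    rw [hF3, card_insert_of_notMem (by simp only [mem_insert, mem_Icc, mem_singleton]; omega),
      card_insert_of_notMem (by simp only [mem_insert, mem_Icc, mem_singleton]; omega), Nat.card_Icc]; omega
  have hF4card : F4.card = r := by
    rw [hF4, card_insert_of_notMem (by simp only [mem_insert, mem_Icc, mem_singleton]; omega),
      card_insert_of_notMem (by simp only [mem_insert, mem_Icc, mem_singleton]; omega),
      card_insert_of_notMem (by simp only [mem_insert, mem_Icc, mem_singleton]; omega), Nat.card_Icc]; omega
  have hF2sub : F2 ⊆ Icc 1 t := by
    intro v hv; simp only [hF2, mem_insert, mem_Icc] at hv ⊢; omega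
  have hF3sub : F3 ⊆ Icc 1 t := by
    intro v hv; simp only [hF3, mem_insert, mem_Icc] at hv ⊢; omega
  have hF4sub : F4 ⊆ Icc 1 t := by
    intro v hv; simp only [hF4, mem_insert, mem_Icc] at hv ⊢; omega
  have hF2mem : F2 ∈ A.filter (fun e => n ∈ e ∧ 1 ∉ e) := by
    simp only [hA, mem_filter, mem_powersetCard]; exact ⟨⟨hF2sub, hF2card⟩, hnF2, h1F2⟩
  have hF3mem : F3 ∈ A.filter (fun e => n ∈ e ∧ 1 ∉ e) := by
    simp only [hA, mem_filter, mem_powersetCard]; exact ⟨⟨hF3sub, hF3card⟩, hnF3, h1F3⟩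
  have hF4mem : F4 ∈ A.filter (fun e => n ∈ e ∧ 1 ∉ e) := by
    simp only [hA, mem_filter, mem_powersetCard]; exact ⟨⟨hF4sub, hF4card⟩, hnF4, h1F4⟩
  have hF23 : F2 ≠ F3 := by
    intro h
    have h31 : (n+1) ∈ F3 := by simp [hF3]
    rw [← h] at h31
    simp only [hF2, mem_insert, mem_Icc] at h31; omega
  have hF24 : F2 ≠ F4 := by
    intro h
    have h41 : (n+1) ∈ F4 := by simp [hF4]
    rw [← h] at h41
    simp only [hF2, mem_insert, mem_Icc] at h41; omega
  have hF34 : F3 ≠ F4 := by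
    intro h
    have h42 : (n+2) ∈ F4 := by simp [hF4]
    rw [← h] at h42
    simp only [hF3, mem_insert, mem_Icc] at h42; omega
  -- erase computations and product normal forms
  have hF2e : F2.erase n = Icc (n+2) t := by
    rw [hF2]; exact erase_insert (by simp only [mem_insert, mem_Icc, mem_singleton]; omega)
  have hF3e : F3.erase n = insert (n+1) (Icc (n+3) t) := by
    rw [hF3]; exact erase_insert (by simp only [mem_insert, mem_Icc, mem_singleton]; omega)
  have hF4e : F4.erase n = insert (n+1) (insert (n+2) (Icc (n+4) t)) := by
    rw [hF4]; exact erase_insert (by simp only [mem_insert, mem_Icc, mem_singleton]; omega)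
  have hprodF3 : ∏ v ∈ F3.erase n, x v = x (n+1) * ∏ v ∈ Icc (n+3) t, x v := by
    rw [hF3e, prod_insert (by simp only [mem_insert, mem_Icc, mem_singleton]; omega)]
  have hprodF4 : ∏ v ∈ F4.erase n, x v
      = x (n+1) * (x (n+2) * ∏ v ∈ Icc (n+4) t, x v) := by
    rw [hF4e, prod_insert (by simp only [mem_insert, mem_Icc, mem_singleton]; omega), prod_insert (by simp only [mem_insert, mem_Icc, mem_singleton]; omega)]
  -- N1 and Nn
  have hN1val : N1 = ∑ e ∈ A.filter (fun e => n ∈ e ∧ 1 ∉ e), ∏ v ∈ e.erase n, x v := by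
    rw [hN1, hfilter1, hA]
    exact swap_bij t n r (by omega) (by omega) h1n x
  have hNnval : Nn = (∑ e ∈ A.filter (fun e => n ∈ e ∧ 1 ∉ e), ∏ v ∈ e.erase n, x v)
      - ((∏ v ∈ F2.erase n, x v) + (∏ v ∈ F3.erase n, x v) + (∏ v ∈ F4.erase n, x v)) := by
    have hsubset : ({F2, F3, F4} : Finset (Finset ℕ)) ⊆ A.filter (fun e => n ∈ e ∧ 1 ∉ e) := by
      intro e he
      simp only [Finset.mem_insert, Finset.mem_singleton] at he
      rcases he with rfl | rfl | rfl
      exacts [hF2mem, hF3mem, hF4mem]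
    have hsd := Finset.sum_sdiff (f := fun e => ∏ v ∈ e.erase n, x v) hsubset
    have htriple : ∑ e ∈ ({F2, F3, F4} : Finset (Finset ℕ)), ∏ v ∈ e.erase n, x v
        = (∏ v ∈ F2.erase n, x v) + ((∏ v ∈ F3.erase n, x v) + (∏ v ∈ F4.erase n, x v)) := by
      rw [Finset.sum_insert (by simp [hF23, hF24]), Finset.sum_pair hF34]
    rw [hNn, hfiltern]
    rw [htriple] at hsd
    linarith [hsd]
  have hNdiff : N1 - Nn =
      (∏ v ∈ Icc (n+2) t, x v)
      + x (n+1) * ∏ v ∈ Icc (n+3) t, x v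
      + x (n+1) * (x (n+2) * ∏ v ∈ Icc (n+4) t, x v) := by
    rw [hN1val, hNnval, hF2e, hprodF3, hprodF4]; ring
  -- the three witness edges for Q
  have hTmem : ∀ T : Finset ℕ, T ⊆ Icc (n+1) t → T.card = r - 2 →
      insert 1 (insert n T) ∈ E.filter (fun e => 1 ∈ e ∧ n ∈ e) := by
    intro T hTsub hTcard
    have hnT : n ∉ T := by
      intro h; have := mem_Icc.1 (hTsub h); omega
    have h1T : (1:ℕ) ∉ insert n T := by
      simp only [mem_insert]; push_neg
      exact ⟨h1n, fun h => by have := mem_Icc.1 (hTsub h); omega⟩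
    have hone : (1:ℕ) ∈ insert 1 (insert n T) := mem_insert_self _ _
    simp only [hE, mem_filter, mem_sdiff, Finset.mem_insert, Finset.mem_singleton, hA,
      mem_powersetCard]
    refine ⟨⟨⟨?_, ?_⟩, ?_⟩, by simp, by simp⟩
    · intro v hv
      rcases mem_insert.1 hv with rfl | hv
      · exact h1t
      · rcases mem_insert.1 hv with rfl | hv
        · exact hnt
        · have := mem_Icc.1 (hTsub hv); exact mem_Icc.2 ⟨by omega, this.2⟩
    · rw [card_insert_of_notMem h1T, card_insert_of_notMem hnT, hTcard]; omega
    · rintro (h | h | h | h)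
      · exact h1F1 (h ▸ hone)
      · exact h1F2 (h ▸ hone)
      · exact h1F3 (h ▸ hone)
      · exact h1F4 (h ▸ hone)
  set T2 : Finset ℕ := Icc (n+3) t with hT2
  set T3 : Finset ℕ := insert (n+2) (Icc (n+4) t) with hT3
  have hT2sub : T2 ⊆ Icc (n+1) t := by
    intro v hv; simp only [hT2, mem_Icc] at hv ⊢; omega
  have hT2card : T2.card = r - 2 := by rw [hT2, Nat.card_Icc]; omega
  have hT3sub : T3 ⊆ Icc (n+1) t := by
    intro v hv; simp only [hT3, mem_insert, mem_Icc] at hv ⊢; omega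
  have hT3card : T3.card = r - 2 := by
    rw [hT3, card_insert_of_notMem (by simp only [mem_insert, mem_Icc, mem_singleton]; omega), Nat.card_Icc]; omega
  have hanti' : ∀ i j : ℕ, 1 ≤ i → i ≤ j → j ≤ t → x j ≤ x i := hanti
  obtain ⟨T4, hT4sub, hT4card, hT4mem1, hT4le⟩ :
      ∃ T4 : Finset ℕ, T4 ⊆ Icc (n+1) t ∧ T4.card = r - 2 ∧ (n+1) ∈ T4 ∧
        x (n+1) * (x (n+2) * ∏ v ∈ Icc (n+4) t, x v) ≤ x n * ∏ v ∈ T4, x v := by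
    rcases eq_or_lt_of_le hr with h3 | h4
    · refine ⟨{n+1}, ?_, ?_, mem_singleton_self _, ?_⟩
      · intro v hv; simp only [mem_singleton] at hv; simp only [hv, mem_Icc]; omega
      · simp; omega
      · have hIempty : Icc (n+4) t = ∅ := Icc_eq_empty (by omega)
        rw [hIempty, prod_empty, prod_singleton]
        have ha1 : x (n+2) ≤ x n := hanti' n (n+2) (by omega) (by omega) (by omega)
        have hb1 : 0 ≤ x (n+1) := hx0 (n+1)
        nlinarith
    · refine ⟨insert (n+1) (insert (n+2) (Icc (n+5) t)), ?_, ?_, mem_insert_self _ _, ?_⟩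
      · intro v hv
        simp only [mem_insert, mem_Icc] at hv ⊢; omega
      · rw [card_insert_of_notMem (by simp only [mem_insert, mem_Icc, mem_singleton]; omega),
          card_insert_of_notMem (by simp only [mem_insert, mem_Icc, mem_singleton]; omega), Nat.card_Icc]; omega
      · have hsplit4 : Icc (n+4) t = insert (n+4) (Icc (n+5) t) := by
          ext v; simp only [mem_insert, mem_Icc]; omega
        rw [hsplit4, prod_insert (by simp only [mem_insert, mem_Icc, mem_singleton]; omega),
          prod_insert (by simp only [mem_insert, mem_Icc, mem_singleton]; omega),
          prod_insert (by simp only [mem_insert, mem_Icc, mem_singleton]; omega)]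
        have ha1 : x (n+4) ≤ x n := hanti' n (n+4) (by omega) (by omega) (by omega)
        have hb1 : 0 ≤ x (n+1) := hx0 (n+1)
        have hb2 : 0 ≤ x (n+2) := hx0 (n+2)
        have hb5 : 0 ≤ ∏ v ∈ Icc (n+5) t, x v := prod_nonneg fun v _ => hx0 v
        nlinarith [mul_nonneg (mul_nonneg (sub_nonneg.2 ha1) hb1) (mul_nonneg hb2 hb5)]
  have h4nT2 : (n+1) ∉ T2 := by simp only [hT2, mem_insert, mem_Icc]; omega
  have h4nT3 : (n+1) ∉ T3 := by simp only [hT3, mem_insert, mem_Icc]; omega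
  have h23 : (n+3) ∈ T2 := by simp only [hT2, mem_insert, mem_Icc]; omega
  have h23' : (n+3) ∉ T3 := by simp only [hT3, mem_insert, mem_Icc]; omega
  -- distinct witness edges
  set e2 : Finset ℕ := insert 1 (insert n T2) with he2
  set e3 : Finset ℕ := insert 1 (insert n T3) with he3
  set e4 : Finset ℕ := insert 1 (insert n T4) with he4
  have hmm : ∀ (T : Finset ℕ) (v : ℕ), T ⊆ Icc (n+1) t →
      (v ∈ insert 1 (insert n T) ↔ v = 1 ∨ v = n ∨ v ∈ T) := by
    intro T v _; simp [mem_insert]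
  have he23 : e2 ≠ e3 := by
    intro h
    have : (n+3) ∈ e3 := h ▸ (by rw [he2, hmm T2 (n+3) hT2sub]; exact Or.inr (Or.inr h23))
    rw [he3, hmm T3 (n+3) hT3sub] at this
    rcases this with h' | h' | h'
    · omega
    · omega
    · exact h23' h'
  have he24 : e2 ≠ e4 := by
    intro h
    have : (n+1) ∈ e2 := h.symm ▸ (by rw [he4, hmm T4 (n+1) hT4sub]; exact Or.inr (Or.inr hT4mem1))
    rw [he2, hmm T2 (n+1) hT2sub] at this
    rcases this with h' | h' | h'
    · omega
    · omega
    · exact h4nT2 h'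
  have he34 : e3 ≠ e4 := by
    intro h
    have : (n+1) ∈ e3 := h.symm ▸ (by rw [he4, hmm T4 (n+1) hT4sub]; exact Or.inr (Or.inr hT4mem1))
    rw [he3, hmm T3 (n+1) hT3sub] at this
    rcases this with h' | h' | h'
    · omega
    · omega
    · exact h4nT3 h'
  have herase : ∀ T : Finset ℕ, T ⊆ Icc (n+1) t →
      ((insert 1 (insert n T)).erase 1).erase n = T := by
    intro T hTsub
    have hnT : n ∉ T := by intro h; have := mem_Icc.1 (hTsub h); omega
    have h1T : (1:ℕ) ∉ insert n T := by
      simp only [mem_insert]; push_neg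
      exact ⟨h1n, fun h => by have := mem_Icc.1 (hTsub h); omega⟩
    rw [erase_insert h1T, erase_insert hnT]
  have hQge : (∏ v ∈ T2, x v) + (∏ v ∈ T3, x v) + (∏ v ∈ T4, x v) ≤ Q := by
    have hsub : ({e2, e3, e4} : Finset (Finset ℕ)) ⊆ E.filter (fun e => 1 ∈ e ∧ n ∈ e) := by
      intro e he
      simp only [Finset.mem_insert, Finset.mem_singleton] at he
      rcases he with rfl | rfl | rfl
      · exact hTmem T2 hT2sub hT2card
      · exact hTmem T3 hT3sub hT3card
      · exact hTmem T4 hT4sub hT4card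
    have hle : ∑ e ∈ ({e2, e3, e4} : Finset (Finset ℕ)), ∏ v ∈ (e.erase 1).erase n, x v ≤ Q := by
      rw [hQ]
      exact Finset.sum_le_sum_of_subset_of_nonneg hsub
        (fun e _ _ => prod_nonneg fun v _ => hx0 v)
    have htriple : ∑ e ∈ ({e2, e3, e4} : Finset (Finset ℕ)), ∏ v ∈ (e.erase 1).erase n, x v
        = (∏ v ∈ T2, x v) + ((∏ v ∈ T3, x v) + (∏ v ∈ T4, x v)) := by
      rw [Finset.sum_insert (by simp [he23, he24]), Finset.sum_pair he34,
        he2, he3, he4, herase T2 hT2sub, herase T3 hT3sub, herase T4 hT4sub]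
    rw [htriple] at hle
    linarith [hle]
  have hQpos : 0 < Q := by
    have p2 : 0 < ∏ v ∈ T2, x v :=
      prod_pos fun v hv => hpos v (by have := mem_Icc.1 (hT2sub hv); exact mem_Icc.2 ⟨by omega, this.2⟩)
    have p3 : 0 < ∏ v ∈ T3, x v :=
      prod_pos fun v hv => hpos v (by have := mem_Icc.1 (hT3sub hv); exact mem_Icc.2 ⟨by omega, this.2⟩)
    have p4 : 0 < ∏ v ∈ T4, x v :=
      prod_pos fun v hv => hpos v (by have := mem_Icc.1 (hT4sub hv); exact mem_Icc.2 ⟨by omega, this.2⟩)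
    linarith [hQge]
  -- the scalar inequalities
  have hsplit2 : Icc (n+2) t = insert (n+2) (Icc (n+3) t) := by
    ext v; simp only [mem_insert, mem_Icc]; omega
  have hsplit3 : Icc (n+3) t = insert (n+3) (Icc (n+4) t) := by
    ext v; simp only [mem_insert, mem_Icc]; omega
  have hR4 : 0 ≤ ∏ v ∈ Icc (n+4) t, x v := prod_nonneg fun v _ => hx0 v
  have hle2 : ∏ v ∈ Icc (n+2) t, x v ≤ x n * ∏ v ∈ T2, x v := by
    rw [hsplit2, prod_insert (by simp only [mem_insert, mem_Icc, mem_singleton]; omega), hT2]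
    exact mul_le_mul_of_nonneg_right (hanti' n (n+2) (by omega) (by omega) (by omega))
      (prod_nonneg fun v _ => hx0 v)
  have hle3 : x (n+1) * ∏ v ∈ Icc (n+3) t, x v ≤ x n * ∏ v ∈ T3, x v := by
    rw [hsplit3, prod_insert (by simp only [mem_insert, mem_Icc, mem_singleton]; omega), hT3,
      prod_insert (by simp only [mem_insert, mem_Icc, mem_singleton]; omega)]
    have ha1 : x (n+1) ≤ x n := hanti' n (n+1) (by omega) (by omega) (by omega)
    have ha2 : x (n+3) ≤ x (n+2) := hanti' (n+2) (n+3) (by omega) (by omega) (by omega)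
    have hb1 : 0 ≤ x (n+1) := hx0 (n+1)
    have hb3 : 0 ≤ x (n+3) := hx0 (n+3)
    have hmm : x (n+1) * x (n+3) ≤ x n * x (n+2) := mul_le_mul ha1 ha2 hb3 (hx0 n)
    nlinarith [mul_le_mul_of_nonneg_right hmm hR4]
  have hPle : (∏ v ∈ Icc (n+2) t, x v)
      + x (n+1) * ∏ v ∈ Icc (n+3) t, x v
      + x (n+1) * (x (n+2) * ∏ v ∈ Icc (n+4) t, x v) ≤ x n * Q := by
    have hmulQ := mul_le_mul_of_nonneg_left hQge (hx0 n)
    nlinarith [hle2, hle3, hT4le, hmulQ]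
  -- conclusion
  have hx1pos : 0 < x 1 := hpos 1 h1t
  have hfin : ∀ ε : ℝ, 0 < ε → x 1 ≤ 2 * x n + ε := by
    intro ε hε
    have hε' : 0 < min ε (x 1) := lt_min hε hx1pos
    have h := hkey (min ε (x 1)) hε' (min_le_right _ _)
    rw [hNdiff] at h
    have h2 : (x 1 - x n) * Q ≤ (x n + min ε (x 1)) * Q := by
      nlinarith [hPle, h]
    have h3 : x 1 - x n ≤ x n + min ε (x 1) := le_of_mul_le_mul_right (by linarith [h2]) hQpos
    have := min_le_left ε (x 1)
    linarith
  exact le_of_forall_pos_le_add hfin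
end
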